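/- arXiv:math/0701391 — 8 statements merged into one kernel-verified Lean document; each statement's English description precedes it below -/
import Mathlib

section
/- If π/4 ≤ α ≤ π/2, then μ(x₁,y₁,α,x₂,y₂,β) ≥ (√2/6)·sin α, for all real x₁, y₁, x₂, y₂, β. -/
open Real MeasureTheory Set

noncomputable def pt (x y : ℝ) : EuclideanSpace ℝ (Fin 2) :=
  (WithLp.equiv 2 (Fin 2 → ℝ)).symm ![x, y]

noncomputable def Phi : EuclideanSpace ℝ (Fin 2) ≃ᵐ ℝ × ℝ :=
  (((MeasurableEquiv.toLp 2 (Fin 2 → ℝ)).symm).trans MeasurableEquiv.finTwoArrow).trans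
    ((MeasurableEquiv.prodComm : ℝ × ℝ ≃ᵐ ℝ × ℝ))

lemma Phi_mp : MeasurePreserving Phi volume volume := by
  have m3 : MeasurePreserving ((MeasurableEquiv.prodComm : ℝ × ℝ ≃ᵐ ℝ × ℝ)) volume volume := by
    rw [Measure.volume_eq_prod]
    exact Measure.measurePreserving_swap
  exact (m3.comp ((volume_preserving_finTwoArrow ℝ).comp
    (EuclideanSpace.volume_preserving_symm_measurableEquiv_toLp (Fin 2))))

lemma Phi_symm_apply (y x : ℝ) : Phi.symm (y, x) = pt x y := rfl

lemma pt_comb (c d u v u' v' : ℝ) :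
    c • pt u v + d • pt u' v' = pt (c*u + d*u') (c*v + d*v') := by
  ext i
  fin_cases i <;> simp [pt, WithLp.equiv] <;> rfl

lemma mem_tri {p h x y : ℝ} (hy : y / h ∈ Set.Ioo (0:ℝ) 1)
    (hx1 : p * (y/h) ≤ x) (hx2 : x ≤ 1 + (p - 1) * (y/h)) :
    pt x y ∈ convexHull ℝ {pt 0 0, pt 1 0, pt p h} := by
  have hh : h ≠ 0 := by
    rintro rfl; simp at hy
  set l := y / h with hl
  obtain ⟨hl0, hl1⟩ := hy
  have h1l : (0:ℝ) < 1 - l := by linarith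
  set s : ℝ := (x - l * p) / (1 - l) with hs
  have hs0 : 0 ≤ s := div_nonneg (by nlinarith) h1l.le
  have hs1 : s ≤ 1 := by
    rw [div_le_one h1l]; nlinarith
  have hE : pt 0 0 ∈ convexHull ℝ {pt 0 0, pt 1 0, pt p h} :=
    subset_convexHull ℝ _ (by simp)
  have hF : pt 1 0 ∈ convexHull ℝ {pt 0 0, pt 1 0, pt p h} :=
    subset_convexHull ℝ _ (by simp)
  have hP : pt p h ∈ convexHull ℝ {pt 0 0, pt 1 0, pt p h} :=
    subset_convexHull ℝ _ (by simp)
  have hM : pt s 0 ∈ convexHull ℝ {pt 0 0, pt 1 0, pt p h} := by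
    have := (convex_convexHull ℝ ({pt 0 0, pt 1 0, pt p h} : Set (EuclideanSpace ℝ (Fin 2)))) hE hF
      (by linarith : (0:ℝ) ≤ 1 - s) hs0 (by ring)
    rwa [pt_comb, show (1-s)*0 + s*1 = s by ring, show (1-s)*0 + s*0 = (0:ℝ) by ring] at this
  have hX := (convex_convexHull ℝ ({pt 0 0, pt 1 0, pt p h} : Set (EuclideanSpace ℝ (Fin 2)))) hM hP
    h1l.le hl0.le (by ring)
  rwa [pt_comb, show (1-l)*s + l*p = x by rw [hs]; field_simp; try ring,
    show (1-l)*0 + l*h = y by rw [hl]; field_simp; ring] at hX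

noncomputable def reg (p h : ℝ) : Set (ℝ × ℝ) :=
  regionBetween (fun y => p * (y/h)) (fun y => 1 + (p - 1) * (y/h)) (Set.Ioo (min h 0) (max h 0))

lemma reg_meas (p h : ℝ) : MeasurableSet (reg p h) := by
  apply measurableSet_regionBetween <;> first | exact measurableSet_Ioo | fun_prop

lemma preimage_reg_subset (p h : ℝ) :
    Phi ⁻¹' (reg p h) ⊆ convexHull ℝ {pt 0 0, pt 1 0, pt p h} := by
  rintro z hz
  obtain ⟨hy, hx⟩ := hz
  set q := Phi z with hq
  have hz' : z = pt q.2 q.1 := by rw [← Phi_symm_apply]; simp [hq]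
  rw [hz']
  apply mem_tri
  · rcases lt_trichotomy h 0 with hneg | h0 | hpos
    · rw [min_eq_left hneg.le, max_eq_right hneg.le] at hy
      constructor
      · exact div_pos_of_neg_of_neg hy.2 hneg
      · rw [div_lt_one_of_neg hneg]; exact hy.1
    · subst h0; simp at hy
    · rw [min_eq_right hpos.le, max_eq_left hpos.le] at hy
      exact ⟨div_pos hy.1 hpos, (div_lt_one hpos).2 hy.2⟩
  · exact hx.1.le
  · exact hx.2.le

lemma reg_vol {p h : ℝ} (hh : h ≠ 0) : volume (reg p h) = ENNReal.ofReal (|h| / 2) := by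
  rw [reg, Measure.volume_eq_prod,
    volume_regionBetween_eq_integral (f := fun y => p * (y/h)) (g := fun y => 1 + (p - 1) * (y/h))
      (((by fun_prop : Continuous fun y : ℝ => p * (y/h)).integrableOn_Icc).mono_set Ioo_subset_Icc_self)
      (((by fun_prop : Continuous fun y : ℝ => 1 + (p - 1) * (y/h)).integrableOn_Icc).mono_set Ioo_subset_Icc_self)
      measurableSet_Ioo
      (by intro x hx; rcases lt_or_gt_of_ne hh with hneg | hpos
          · rw [min_eq_left hneg.le, max_eq_right hneg.le] at hx
            nlinarith [div_pos_of_neg_of_neg hx.2 hneg, (div_lt_one_of_neg hneg).2 hx.1]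
          · rw [min_eq_right hpos.le, max_eq_left hpos.le] at hx
            nlinarith [div_pos hx.1 hpos, (div_lt_one hpos).2 hx.2])]
  congr 1
  have key : ∀ x, ((fun y => 1 + (p - 1) * (y/h)) - (fun y => p * (y/h))) x = 1 - x / h := by
    intro x; simp; ring
  rw [MeasureTheory.integral_congr_ae (Filter.Eventually.of_forall key)]
  rcases lt_or_gt_of_ne hh with hneg | hpos
  · rw [min_eq_left hneg.le, max_eq_right hneg.le, abs_of_neg hneg,
      ← MeasureTheory.integral_Ioc_eq_integral_Ioo, ← intervalIntegral.integral_of_le hneg.le]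
    rw [intervalIntegral.integral_sub intervalIntegrable_const
        ((intervalIntegral.intervalIntegrable_id).div_const h)]
    simp [intervalIntegral.integral_div, integral_id]
    field_simp
    ring
  · rw [min_eq_right hpos.le, max_eq_left hpos.le, abs_of_pos hpos,
      ← MeasureTheory.integral_Ioc_eq_integral_Ioo, ← intervalIntegral.integral_of_le hpos.le]
    rw [intervalIntegral.integral_sub intervalIntegrable_const
        ((intervalIntegral.intervalIntegrable_id).div_const h)]
    simp [intervalIntegral.integral_div, integral_id]
    field_simp
    ring

noncomputable def sqVertex (x y a : ℝ) (k : Fin 4) : EuclideanSpace ℝ (Fin 2) :=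
  pt (x + Real.sqrt 2 / 6 * Real.cos (a + ((k : ℕ) : ℝ) * (Real.pi / 2)))
     (y + Real.sqrt 2 / 6 * Real.sin (a + ((k : ℕ) : ℝ) * (Real.pi / 2)))

noncomputable def triVertex (x y b : ℝ) (k : Fin 3) : EuclideanSpace ℝ (Fin 2) :=
  pt (x + Real.sqrt 3 / 6 * Real.cos (b + ((k : ℕ) : ℝ) * (2 * Real.pi / 3)))
     (y + Real.sqrt 3 / 6 * Real.sin (b + ((k : ℕ) : ℝ) * (2 * Real.pi / 3)))

noncomputable def config (x1 y1 a x2 y2 b : ℝ) : Set (EuclideanSpace ℝ (Fin 2)) :=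
  {pt 0 0, pt 1 0} ∪ Set.range (sqVertex x1 y1 a) ∪ Set.range (triVertex x2 y2 b)

noncomputable def area (x1 y1 a x2 y2 b : ℝ) : ℝ :=
  (volume (convexHull ℝ (config x1 y1 a x2 y2 b))).toReal

theorem area_ge_square_height (x1 y1 a x2 y2 b : ℝ)
    (ha : Real.pi / 4 ≤ a) (ha' : a ≤ Real.pi / 2) :
    area x1 y1 a x2 y2 b ≥ Real.sqrt 2 / 6 * Real.sin a := by
  unfold area
  have hpi := Real.pi_pos
  set c : ℝ := Real.sqrt 2 / 6 with hc
  have hc0 : 0 < c := by rw [hc]; positivity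
  have hsin : 0 < Real.sin a := Real.sin_pos_of_pos_of_lt_pi (by linarith) (by linarith)
  set t : ℝ := c * Real.sin a with htdef
  have ht : 0 < t := mul_pos hc0 hsin
  set C := config x1 y1 a x2 y2 b with hC
  have hEC : pt 0 0 ∈ C := Or.inl (Or.inl (Set.mem_insert _ _))
  have hFC : pt 1 0 ∈ C := Or.inl (Or.inl (Set.mem_insert_of_mem _ rfl))
  have hPC : pt (x1 + c * Real.cos a) (y1 + t) ∈ C := by
    refine Or.inl (Or.inr ⟨0, ?_⟩)
    unfold sqVertex
    norm_num
    rfl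
  have hQC : pt (x1 - c * Real.cos a) (y1 - t) ∈ C := by
    refine Or.inl (Or.inr ⟨2, ?_⟩)
    unfold sqVertex
    have hang : a + (((2:Fin 4):ℕ):ℝ) * (Real.pi/2) = a + Real.pi := by norm_num; ring
    rw [hang, Real.cos_add_pi, Real.sin_add_pi]
    congr 1 <;> ring
  have hsubP : convexHull ℝ {pt 0 0, pt 1 0, pt (x1 + c * Real.cos a) (y1 + t)}
      ⊆ convexHull ℝ C :=
    convexHull_mono (Set.insert_subset hEC (Set.insert_subset hFC
      (Set.singleton_subset_iff.2 hPC)))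
  have hsubQ : convexHull ℝ {pt 0 0, pt 1 0, pt (x1 - c * Real.cos a) (y1 - t)}
      ⊆ convexHull ℝ C :=
    convexHull_mono (Set.insert_subset hEC (Set.insert_subset hFC
      (Set.singleton_subset_iff.2 hQC)))
  have hP1 : Phi ⁻¹' reg (x1 + c * Real.cos a) (y1 + t) ⊆ convexHull ℝ C :=
    (preimage_reg_subset _ _).trans hsubP
  have hQ1 : Phi ⁻¹' reg (x1 - c * Real.cos a) (y1 - t) ⊆ convexHull ℝ C :=
    (preimage_reg_subset _ _).trans hsubQ
  have volpre : ∀ p h : ℝ, volume (Phi ⁻¹' reg p h) = volume (reg p h) := fun p h =>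
    Phi_mp.measure_preimage (reg_meas p h).nullMeasurableSet
  have key : ENNReal.ofReal t ≤ volume (convexHull ℝ C) := by
    rcases le_or_gt t y1 with h1 | h1
    · calc ENNReal.ofReal t ≤ ENNReal.ofReal (|y1 + t| / 2) :=
            ENNReal.ofReal_le_ofReal (by rw [abs_of_pos (by linarith)]; linarith)
        _ = volume (reg (x1 + c * Real.cos a) (y1 + t)) :=
            (reg_vol (by linarith : (0:ℝ) < y1 + t).ne').symm
        _ = volume (Phi ⁻¹' reg (x1 + c * Real.cos a) (y1 + t)) := (volpre _ _).symm
        _ ≤ volume (convexHull ℝ C) := measure_mono hP1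
    · rcases le_or_gt y1 (-t) with h2 | h2
      · calc ENNReal.ofReal t ≤ ENNReal.ofReal (|y1 - t| / 2) :=
              ENNReal.ofReal_le_ofReal (by rw [abs_of_neg (by linarith)]; linarith)
          _ = volume (reg (x1 - c * Real.cos a) (y1 - t)) :=
              (reg_vol (by intro h; linarith [h ▸ (by linarith : y1 - t < 0)] : y1 - t ≠ 0)).symm
          _ = volume (Phi ⁻¹' reg (x1 - c * Real.cos a) (y1 - t)) := (volpre _ _).symm
          _ ≤ volume (convexHull ℝ C) := measure_mono hQ1
      · have hp : 0 < y1 + t := by linarith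
        have hq : y1 - t < 0 := by linarith
        have hdisj : Disjoint (Phi ⁻¹' reg (x1 + c * Real.cos a) (y1 + t))
            (Phi ⁻¹' reg (x1 - c * Real.cos a) (y1 - t)) := by
          rw [Set.disjoint_left]
          rintro z ⟨hy1', _⟩ ⟨hy2', _⟩
          rw [min_eq_right hp.le, max_eq_left hp.le] at hy1'
          rw [min_eq_left hq.le, max_eq_right hq.le] at hy2'
          exact absurd (hy1'.1.trans hy2'.2) (lt_irrefl _)
        calc ENNReal.ofReal t
            = ENNReal.ofReal ((y1 + t)/2 + (t - y1)/2) := by congr 1; ring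
          _ = ENNReal.ofReal ((y1 + t)/2) + ENNReal.ofReal ((t - y1)/2) :=
              ENNReal.ofReal_add (by linarith) (by linarith)
          _ = volume (reg (x1 + c * Real.cos a) (y1 + t))
              + volume (reg (x1 - c * Real.cos a) (y1 - t)) := by
              rw [reg_vol hp.ne', reg_vol hq.ne, abs_of_pos hp, abs_of_neg hq]
              congr 2
              ring
          _ = volume (Phi ⁻¹' reg (x1 + c * Real.cos a) (y1 + t))
              + volume (Phi ⁻¹' reg (x1 - c * Real.cos a) (y1 - t)) := by
              rw [volpre, volpre]
          _ = volume (Phi ⁻¹' reg (x1 + c * Real.cos a) (y1 + t)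
              ∪ Phi ⁻¹' reg (x1 - c * Real.cos a) (y1 - t)) :=
              (measure_union hdisj ((reg_meas _ _).preimage Phi.measurable)).symm
          _ ≤ volume (convexHull ℝ C) := measure_mono (Set.union_subset hP1 hQ1)
  have hCfin : C.Finite := by
    rw [hC]; unfold config
    exact (((Set.finite_singleton _).insert _).union (Set.finite_range _)).union
      (Set.finite_range _)
  have hfin : volume (convexHull ℝ C) ≠ ⊤ :=
    (hCfin.isCompact_convexHull ℝ).measure_lt_top.ne
  have := ENNReal.toReal_mono hfin key
  rwa [ENNReal.toReal_ofReal ht.le] at this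
end

section
/- If v₀ = (x₁,y₁,α,x₂,y₂,β) minimizes μ over ℝ⁶, then every vertex of the square S(x₁,y₁,α) and every vertex of the triangle T(x₂,y₂,β) has second coordinate in [−0.46, 0.46]. -/
open Real MeasureTheory

/-! ### Auxiliary material -/

noncomputable def e2 : EuclideanSpace ℝ (Fin 2) ≃ᵐ ℝ × ℝ :=
  (MeasurableEquiv.toLp 2 (Fin 2 → ℝ)).symm.trans (MeasurableEquiv.finTwoArrow)

lemma e2_mp : MeasurePreserving e2 volume volume :=
  (MeasureTheory.volume_preserving_finTwoArrow ℝ).comp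
    (EuclideanSpace.volume_preserving_symm_measurableEquiv_toLp (Fin 2))

lemma e2_apply (z : EuclideanSpace ℝ (Fin 2)) : e2 z = (z 0, z 1) := rfl

lemma pt_add (x y u v : ℝ) : pt x y + pt u v = pt (x+u) (y+v) := by
  ext i; fin_cases i <;> simp [pt]

lemma pt_smul (c x y : ℝ) : c • pt x y = pt (c*x) (c*y) := by
  ext i; fin_cases i <;> simp [pt]

lemma pt_seg (s : ℝ) : (1-s) • pt 0 0 + s • pt 1 0 = pt s 0 := by
  rw [pt_smul, pt_smul, pt_add]; norm_num

lemma s2s2 : Real.sqrt 2 * Real.sqrt 2 = 2 := Real.mul_self_sqrt (by norm_num)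
lemma s3s3 : Real.sqrt 3 * Real.sqrt 3 = 3 := Real.mul_self_sqrt (by norm_num)

lemma h3l : 1.732 < Real.sqrt 3 := by
  rw [show (1.732:ℝ) = Real.sqrt (1.732^2) from (Real.sqrt_sq (by norm_num)).symm]
  exact Real.sqrt_lt_sqrt (by norm_num) (by norm_num)
lemma h3u : Real.sqrt 3 < 1.7321 := by
  rw [show (1.7321:ℝ) = Real.sqrt (1.7321^2) from (Real.sqrt_sq (by norm_num)).symm]
  exact Real.sqrt_lt_sqrt (by norm_num) (by norm_num)

/-! ### Lower bound: a triangle with vertices `(0,0)`, `(1,0)`, `w` has area at least `|w 1|/2`. -/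

lemma tri_lower (w : EuclideanSpace ℝ (Fin 2)) :
    ENNReal.ofReal (|w 1| / 2) ≤ volume (convexHull ℝ {pt 0 0, pt 1 0, w}) := by
  rcases eq_or_ne (w 1) 0 with hq | hq
  · simp [hq]
  set p := w 0 with hp
  set q := w 1 with hqdef
  set l : ℝ → ℝ := fun y => p * (y / q) with hl
  set r : ℝ → ℝ := fun y => p * (y / q) + (1 - y / q) with hr
  set s : Set ℝ := Set.Ioo (min q 0) (max q 0) with hs
  have hlc : Continuous l := by fun_prop
  have hrc : Continuous r := by fun_prop
  have hRBm : MeasurableSet (regionBetween l r s) :=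
    measurableSet_regionBetween hlc.measurable hrc.measurable measurableSet_Ioo
  set S : Set (EuclideanSpace ℝ (Fin 2)) := e2 ⁻¹' (Prod.swap ⁻¹' (regionBetween l r s)) with hS
  have hvol : volume S = volume (regionBetween l r s) := by
    rw [e2_mp.measure_preimage ((measurable_swap hRBm).nullMeasurableSet)]
    have hswap : MeasurePreserving (Prod.swap : ℝ × ℝ → ℝ × ℝ) volume volume := by
      rw [Measure.volume_eq_prod]; exact Measure.measurePreserving_swap
    exact hswap.measure_preimage hRBm.nullMeasurableSet
  have hq2 : (0:ℝ) < q ∨ q < 0 := hq.lt_or_gt.symm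
  have hsub : S ⊆ convexHull ℝ {pt 0 0, pt 1 0, w} := by
    intro z hz
    simp only [hS, Set.mem_preimage, e2_apply, Prod.swap, regionBetween, Set.mem_setOf_eq] at hz
    obtain ⟨hy, hx⟩ := hz
    set t := z 1 / q with ht
    have hxl : p * t < z 0 := hx.1
    have hxr : z 0 < p * t + (1 - t) := hx.2
    have htq : t * q = z 1 := by rw [ht]; field_simp
    have ht0 : 0 < t := by
      rcases hq2 with h | h
      · simp [hs, h.le, h] at hy
        exact div_pos hy.1 h
      · simp [hs, h.le, h] at hy
        exact div_pos_of_neg_of_neg hy.2 h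
    have ht1 : t < 1 := by
      rcases hq2 with h | h
      · simp [hs, h.le, h] at hy
        exact (div_lt_one h).2 hy.2
      · simp [hs, h.le, h] at hy
        by_contra hcon
        push_neg at hcon
        have h2 : t * q ≤ 1 * q := mul_le_mul_of_nonpos_right hcon h.le
        rw [htq, one_mul] at h2
        exact absurd hy.1 (not_lt.2 h2)
    set u := (z 0 - t * p) / (1 - t) with hu
    have h1t : (0:ℝ) < 1 - t := by linarith
    have hu0 : 0 < u := div_pos (by linarith [hxl]) h1t
    have hu1 : u < 1 := (div_lt_one h1t).2 (by linarith [hxr])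
    have hz0 : t * p + (1 - t) * u = z 0 := by
      rw [hu]; field_simp; ring
    have hptu : pt u 0 ∈ convexHull ℝ {pt 0 0, pt 1 0, w} := by
      rw [← pt_seg u]
      exact (convex_convexHull ℝ _) (subset_convexHull ℝ _ (by simp))
        (subset_convexHull ℝ _ (by simp)) (by linarith) (by linarith) (by ring)
    have hw : w ∈ convexHull ℝ {pt 0 0, pt 1 0, w} := subset_convexHull ℝ _ (by simp)
    have hcomb := (convex_convexHull ℝ ({pt 0 0, pt 1 0, w} : Set (EuclideanSpace ℝ (Fin 2))))
      hw hptu ht0.le (by linarith) (by ring : t + (1-t) = 1)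
    have hzeq : z = t • w + (1 - t) • pt u 0 := by
      ext i
      fin_cases i
      · show z 0 = (t • w + (1 - t) • pt u 0) 0
        have : (t • w + (1 - t) • pt u 0) 0 = t * w 0 + (1 - t) * (pt u 0 0) := rfl
        rw [this]
        have hpt0 : pt u 0 0 = u := by simp [pt]
        rw [hpt0, ← hp, ← hz0]
      · show z 1 = (t • w + (1 - t) • pt u 0) 1
        have : (t • w + (1 - t) • pt u 0) 1 = t * w 1 + (1 - t) * (pt u 0 1) := rfl
        rw [this]
        have hpt1 : pt u 0 1 = 0 := by simp [pt]
        rw [hpt1, ← hqdef, htq]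
        ring
    rw [hzeq]; exact hcomb
  have hint : ∀ y ∈ s, l y ≤ r y := by
    intro y hy
    rcases hq2 with h | h
    · simp [hs, h.le, h] at hy
      have : y / q < 1 := (div_lt_one h).2 hy.2
      simp only [hl, hr]; linarith
    · simp [hs, h.le, h] at hy
      have h2 : y / q < 1 := by
        by_contra hcon
        push_neg at hcon
        have h3 : (y / q) * q ≤ 1 * q := mul_le_mul_of_nonpos_right hcon h.le
        rw [div_mul_cancel₀ _ hq, one_mul] at h3
        exact absurd hy.1 (not_lt.2 h3)
      simp only [hl, hr]; linarith
  have hcalc : volume (regionBetween l r s) = ENNReal.ofReal (∫ y in s, (r - l) y) := by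
    rw [Measure.volume_eq_prod]
    exact volume_regionBetween_eq_integral
      (hlc.integrableOn_Icc.mono_set Set.Ioo_subset_Icc_self)
      (hrc.integrableOn_Icc.mono_set Set.Ioo_subset_Icc_self)
      measurableSet_Ioo hint
  have hri : ∫ y in s, (r - l) y = |q| / 2 := by
    have hcg : ∀ y, (r - l) y = 1 - y / q := by intro y; simp [hl, hr]; try ring
    rcases hq2 with h | h
    · have hs' : s = Set.Ioo 0 q := by simp [hs, h.le, h]
      rw [hs', ← MeasureTheory.integral_Ioc_eq_integral_Ioo,
        ← intervalIntegral.integral_of_le h.le]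
      simp only [hcg]
      rw [intervalIntegral.integral_sub intervalIntegrable_const
        (intervalIntegral.intervalIntegrable_id.div_const q)]
      simp [intervalIntegral.integral_div, integral_id, abs_of_pos h]
      field_simp
      try ring
    · have hs' : s = Set.Ioo q 0 := by simp [hs, h.le, h]
      rw [hs', ← MeasureTheory.integral_Ioc_eq_integral_Ioo,
        ← intervalIntegral.integral_of_le h.le]
      simp only [hcg]
      rw [intervalIntegral.integral_sub intervalIntegrable_const
        (intervalIntegral.intervalIntegrable_id.div_const q)]
      simp [intervalIntegral.integral_div, integral_id, abs_of_neg h]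
      field_simp
      try ring
  rw [← hri, ← hcalc, ← hvol]
  exact measure_mono hsub

/-! ### The explicit nearly-optimal configuration -/

lemma pt_congr {x y u v : ℝ} (h1 : x = u) (h2 : y = v) : pt x y = pt u v := by rw [h1, h2]

lemma sq2_red (c : ℝ) : Real.sqrt 2 / 6 * (Real.sqrt 2 * c / 4) = c / 12 := by
  linear_combination (c / 24) * s2s2

lemma sq3_red (c : ℝ) : Real.sqrt 3 / 6 * (Real.sqrt 3 * c) = c / 2 := by
  linear_combination (c / 6) * s3s3

lemma cosA : Real.cos (Real.pi/4 + Real.pi/6) = Real.sqrt 2 * (Real.sqrt 3 - 1) / 4 := by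
  rw [Real.cos_add, Real.cos_pi_div_four, Real.cos_pi_div_six, Real.sin_pi_div_four,
    Real.sin_pi_div_six]
  ring

lemma sinA : Real.sin (Real.pi/4 + Real.pi/6) = Real.sqrt 2 * (Real.sqrt 3 + 1) / 4 := by
  rw [Real.sin_add, Real.cos_pi_div_four, Real.cos_pi_div_six, Real.sin_pi_div_four,
    Real.sin_pi_div_six]
  ring

noncomputable abbrev X1 : ℝ := (10 - Real.sqrt 3)/12
noncomputable abbrev Y1 : ℝ := (2*Real.sqrt 3 - 1)/12
noncomputable abbrev AA : ℝ := Real.pi/4 + Real.pi/6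

lemma sq0 : sqVertex X1 Y1 AA 0 = pt (3/4) (Real.sqrt 3/4) := by
  have h0 : ((((0:Fin 4) : ℕ)) : ℝ) * (Real.pi/2) = 0 := by norm_num
  rw [sqVertex, h0, add_zero]
  exact pt_congr (by rw [cosA, sq2_red]; ring) (by rw [sinA, sq2_red]; ring)

lemma sq1 : sqVertex X1 Y1 AA 1 = pt ((9-2*Real.sqrt 3)/12) ((3*Real.sqrt 3-2)/12) := by
  have h0 : AA + ((((1:Fin 4) : ℕ)) : ℝ) * (Real.pi/2) = AA + Real.pi/2 := by norm_num
  rw [sqVertex, h0, Real.cos_add_pi_div_two, Real.sin_add_pi_div_two, cosA, sinA]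
  have e1 : -(Real.sqrt 2 * (Real.sqrt 3 + 1) / 4) = Real.sqrt 2 * (-(Real.sqrt 3+1)) / 4 := by ring
  rw [e1, sq2_red, sq2_red]
  exact pt_congr (by ring) (by ring)

lemma sq2 : sqVertex X1 Y1 AA 2 = pt ((11-2*Real.sqrt 3)/12) ((Real.sqrt 3-2)/12) := by
  have h0 : AA + ((((2:Fin 4) : ℕ)) : ℝ) * (Real.pi/2) = AA + Real.pi := by
    rw [show ((((2:Fin 4) : ℕ)) : ℝ) = 2 from by norm_cast]; ring
  rw [sqVertex, h0, Real.cos_add_pi, Real.sin_add_pi, cosA, sinA]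
  have e1 : -(Real.sqrt 2 * (Real.sqrt 3 - 1) / 4) = Real.sqrt 2 * (-(Real.sqrt 3-1)) / 4 := by ring
  have e2 : -(Real.sqrt 2 * (Real.sqrt 3 + 1) / 4) = Real.sqrt 2 * (-(Real.sqrt 3+1)) / 4 := by ring
  rw [e1, e2, sq2_red, sq2_red]
  exact pt_congr (by ring) (by ring)

lemma sq3 : sqVertex X1 Y1 AA 3 = pt (11/12) (Real.sqrt 3/12) := by
  have h0 : AA + ((((3:Fin 4) : ℕ)) : ℝ) * (Real.pi/2) = (AA + Real.pi) + Real.pi/2 := by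
    rw [show ((((3:Fin 4) : ℕ)) : ℝ) = 3 from by norm_cast]; ring
  rw [sqVertex, h0, Real.cos_add_pi_div_two, Real.sin_add_pi_div_two, Real.sin_add_pi,
    Real.cos_add_pi, cosA, sinA]
  have e1 : - -(Real.sqrt 2 * (Real.sqrt 3 + 1) / 4) = Real.sqrt 2 * (Real.sqrt 3+1) / 4 := by ring
  have e2 : -(Real.sqrt 2 * (Real.sqrt 3 - 1) / 4) = Real.sqrt 2 * (-(Real.sqrt 3-1)) / 4 := by ring
  rw [e1, e2, sq2_red, sq2_red]
  exact pt_congr (by ring) (by ring)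

lemma tri0 : triVertex (3/4) (Real.sqrt 3/12) (Real.pi/2) 0 = pt (3/4) (Real.sqrt 3/4) := by
  have h0 : ((((0:Fin 3) : ℕ)) : ℝ) * (2*Real.pi/3) = 0 := by norm_num
  rw [triVertex, h0, add_zero, Real.cos_pi_div_two, Real.sin_pi_div_two]
  exact pt_congr (by ring) (by rw [show Real.sqrt 3/12 + Real.sqrt 3/6*1 = Real.sqrt 3/4 by ring])

lemma tri1 : triVertex (3/4) (Real.sqrt 3/12) (Real.pi/2) 1 = pt (1/2) 0 := by
  have h0 : Real.pi/2 + ((((1:Fin 3) : ℕ)) : ℝ) * (2*Real.pi/3) = Real.pi/6 + Real.pi := by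
    rw [show ((((1:Fin 3) : ℕ)) : ℝ) = 1 from by norm_cast]; ring
  rw [triVertex, h0, Real.cos_add_pi, Real.sin_add_pi, Real.cos_pi_div_six, Real.sin_pi_div_six]
  have e1 : Real.sqrt 3/6 * -(Real.sqrt 3/2) = Real.sqrt 3/6 * (Real.sqrt 3 * (-1/2)) := by ring
  rw [e1, sq3_red]
  exact pt_congr (by ring) (by ring)

lemma tri2 : triVertex (3/4) (Real.sqrt 3/12) (Real.pi/2) 2 = pt 1 0 := by
  have h0 : Real.pi/2 + ((((2:Fin 3) : ℕ)) : ℝ) * (2*Real.pi/3) = (-(Real.pi/6)) + 2*Real.pi := by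
    rw [show ((((2:Fin 3) : ℕ)) : ℝ) = 2 from by norm_cast]; ring
  rw [triVertex, h0, Real.cos_add_two_pi, Real.sin_add_two_pi, Real.cos_neg, Real.sin_neg,
    Real.cos_pi_div_six, Real.sin_pi_div_six]
  have e1 : Real.sqrt 3/6 * (Real.sqrt 3/2) = Real.sqrt 3/6 * (Real.sqrt 3 * (1/2)) := by ring
  rw [e1, sq3_red]
  exact pt_congr (by ring) (by ring)

/-! ### The bounding pentagon and its area -/

lemma lin_int (c d a b : ℝ) : ∫ x in a..b, (c*x+d) = c*(b^2-a^2)/2 + d*(b-a) := by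
  rw [intervalIntegral.integral_add ((intervalIntegral.intervalIntegrable_id).const_mul c)
    (intervalIntegrable_const), intervalIntegral.integral_const_mul, integral_id,
    intervalIntegral.integral_const]
  simp [smul_eq_mul]
  ring

noncomputable def Fup : ℝ → ℝ := fun x =>
  min (Real.sqrt 3/3*x + 1/10000) (Real.sqrt 3*(1-x) + 1/10000)
noncomputable def Glo : ℝ → ℝ := fun x =>
  max ((7*Real.sqrt 3-16)/109*x - 1/10000) ((5*Real.sqrt 3-8)/11*(x-1) - 1/10000)

lemma Fup_cont : Continuous Fup :=
  ((continuous_const.mul continuous_id).add continuous_const).min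
    ((continuous_const.mul (continuous_const.sub continuous_id)).add continuous_const)
lemma Glo_cont : Continuous Glo :=
  ((continuous_const.mul continuous_id).sub continuous_const).max
    ((continuous_const.mul (continuous_id.sub continuous_const)).sub continuous_const)

lemma intcalc : ∫ x in Set.Icc (0:ℝ) 1, (Fup x - Glo x) ≤ 228/1000 := by
  have hs3 := s3s3
  have hl := h3l
  have hu := h3u
  have hs3nn : (0:ℝ) ≤ Real.sqrt 3 := Real.sqrt_nonneg 3
  rw [MeasureTheory.integral_Icc_eq_integral_Ioc,
    ← intervalIntegral.integral_of_le (by norm_num : (0:ℝ) ≤ 1)]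
  rw [intervalIntegral.integral_sub (Fup_cont.intervalIntegrable 0 1)
    (Glo_cont.intervalIntegrable 0 1)]
  set xb : ℝ := (11 - 2*Real.sqrt 3)/12 with hxb
  have hxb0 : 0 ≤ xb := by rw [hxb]; nlinarith
  have hxb1 : xb ≤ 1 := by rw [hxb]; nlinarith
  have hF : ∫ x in (0:ℝ)..1, Fup x
      = (∫ x in (0:ℝ)..(3/4), (Real.sqrt 3/3*x + 1/10000))
        + ∫ x in (3/4:ℝ)..1, (-Real.sqrt 3*x + (Real.sqrt 3 + 1/10000)) := by
    rw [← intervalIntegral.integral_add_adjacent_intervals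
      (Fup_cont.intervalIntegrable 0 (3/4)) (Fup_cont.intervalIntegrable (3/4) 1)]
    congr 1
    · apply intervalIntegral.integral_congr
      intro x hx
      rw [Set.uIcc_of_le (by norm_num : (0:ℝ) ≤ 3/4)] at hx
      have : Real.sqrt 3/3*x + 1/10000 ≤ Real.sqrt 3*(1-x) + 1/10000 := by
        nlinarith [hx.1, hx.2]
      simpa [Fup] using min_eq_left this
    · apply intervalIntegral.integral_congr
      intro x hx
      rw [Set.uIcc_of_le (by norm_num : (3/4:ℝ) ≤ 1)] at hx
      have : Real.sqrt 3*(1-x) + 1/10000 ≤ Real.sqrt 3/3*x + 1/10000 := by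
        nlinarith [hx.1, hx.2]
      have h2 := min_eq_right this
      simp only [Fup, h2]
      ring
  have hG : ∫ x in (0:ℝ)..1, Glo x
      = (∫ x in (0:ℝ)..xb, ((7*Real.sqrt 3-16)/109*x + (-1/10000)))
        + ∫ x in xb..(1:ℝ), ((5*Real.sqrt 3-8)/11*x + (-(5*Real.sqrt 3-8)/11 - 1/10000)) := by
    rw [← intervalIntegral.integral_add_adjacent_intervals
      (Glo_cont.intervalIntegrable 0 xb) (Glo_cont.intervalIntegrable xb 1)]
    congr 1
    · apply intervalIntegral.integral_congr
      intro x hx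
      rw [Set.uIcc_of_le hxb0] at hx
      have : (5*Real.sqrt 3-8)/11*(x-1) - 1/10000
          ≤ (7*Real.sqrt 3-16)/109*x - 1/10000 := by
        have hc : (0:ℝ) ≤ 468*Real.sqrt 3 - 696 := by nlinarith
        have hd : (0:ℝ) ≤ xb - x := by linarith [hx.2]
        have := mul_nonneg hc hd
        rw [hxb] at this
        nlinarith [this]
      have h2 := max_eq_left this
      simp only [Glo, h2]
      ring
    · apply intervalIntegral.integral_congr
      intro x hx
      rw [Set.uIcc_of_le hxb1] at hx
      have : (7*Real.sqrt 3-16)/109*x - 1/10000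
          ≤ (5*Real.sqrt 3-8)/11*(x-1) - 1/10000 := by
        have hc : (0:ℝ) ≤ 468*Real.sqrt 3 - 696 := by nlinarith
        have hd : (0:ℝ) ≤ x - xb := by linarith [hx.1]
        have := mul_nonneg hc hd
        rw [hxb] at this
        nlinarith [this]
      have h2 := max_eq_right this
      simp only [Glo, h2]
      ring
  rw [hF, hG, lin_int, lin_int, lin_int, lin_int]
  have hcube : Real.sqrt 3 ^ 3 = 3 * Real.sqrt 3 := by
    nlinarith [hs3]
  rw [hxb]
  ring_nf
  nlinarith [hs3, hcube, hl, hu]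

noncomputable def K2 : Set (ℝ × ℝ) :=
  {z | 0 ≤ z.1 ∧ z.1 ≤ 1 ∧ 3*z.2 ≤ Real.sqrt 3 * z.1 ∧ z.2 ≤ Real.sqrt 3 * (1 - z.1) ∧
    (7*Real.sqrt 3-16)*z.1 ≤ 109*z.2 ∧ (5*Real.sqrt 3-8)*(z.1-1) ≤ 11*z.2}

noncomputable def KE : Set (EuclideanSpace ℝ (Fin 2)) := e2 ⁻¹' K2

lemma K2_meas : MeasurableSet K2 := by
  unfold K2
  apply MeasurableSet.inter
  · exact measurableSet_le measurable_const measurable_fst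
  apply MeasurableSet.inter
  · exact measurableSet_le measurable_fst measurable_const
  apply MeasurableSet.inter
  · exact measurableSet_le (measurable_snd.const_mul 3) (measurable_fst.const_mul _)
  apply MeasurableSet.inter
  · exact measurableSet_le measurable_snd ((measurable_const.sub measurable_fst).const_mul _)
  apply MeasurableSet.inter
  · exact measurableSet_le (measurable_fst.const_mul _) (measurable_snd.const_mul _)
  · exact measurableSet_le ((measurable_fst.sub measurable_const).const_mul _)
      (measurable_snd.const_mul _)

lemma K2_sub : K2 ⊆ regionBetween Glo Fup (Set.Icc 0 1) := by
  rintro z ⟨h1, h2, h3, h4, h5, h6⟩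
  exact ⟨⟨h1, h2⟩, max_lt (by nlinarith) (by nlinarith), lt_min (by linarith) (by linarith)⟩

lemma pt_mem_KE_iff (u v : ℝ) : pt u v ∈ KE ↔ (0 ≤ u ∧ u ≤ 1 ∧
    3*v ≤ Real.sqrt 3 * u ∧ v ≤ Real.sqrt 3 * (1 - u) ∧
    (7*Real.sqrt 3-16)*u ≤ 109*v ∧ (5*Real.sqrt 3-8)*(u-1) ≤ 11*v) := by
  have h0 : pt u v 0 = u := by simp [pt]
  have h1 : pt u v 1 = v := by simp [pt]
  simp only [KE, Set.mem_preimage, e2_apply, h0, h1, K2, Set.mem_setOf_eq]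

lemma KE_convex : Convex ℝ KE := by
  intro z hz w hw α β hα hβ hαβ
  simp only [KE, Set.mem_preimage, e2_apply, K2, Set.mem_setOf_eq] at *
  have c0 : (α • z + β • w) 0 = α * z 0 + β * w 0 := rfl
  have c1 : (α • z + β • w) 1 = α * z 1 + β * w 1 := rfl
  rw [c0, c1]
  obtain ⟨a1, a2, a3, a4, a5, a6⟩ := hz
  obtain ⟨b1, b2, b3, b4, b5, b6⟩ := hw
  refine ⟨?_, ?_, ?_, ?_, ?_, ?_⟩
  · nlinarith [mul_nonneg hα a1, mul_nonneg hβ b1]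
  · nlinarith [mul_le_mul_of_nonneg_left a2 hα, mul_le_mul_of_nonneg_left b2 hβ]
  · nlinarith [mul_le_mul_of_nonneg_left a3 hα, mul_le_mul_of_nonneg_left b3 hβ]
  · nlinarith [mul_le_mul_of_nonneg_left a4 hα, mul_le_mul_of_nonneg_left b4 hβ]
  · nlinarith [mul_le_mul_of_nonneg_left a5 hα, mul_le_mul_of_nonneg_left b5 hβ]
  · nlinarith [mul_le_mul_of_nonneg_left a6 hα, mul_le_mul_of_nonneg_left b6 hβ]

lemma KE_vol : volume KE ≤ ENNReal.ofReal (228/1000) := by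
  have hGF : ∀ x ∈ Set.Icc (0:ℝ) 1, Glo x ≤ Fup x := by
    intro x hx
    obtain ⟨h0, h1⟩ := hx
    have hA : (0:ℝ) ≤ (16 - 7*Real.sqrt 3) * x := mul_nonneg (by nlinarith [h3u]) h0
    have hB : (0:ℝ) ≤ (5*Real.sqrt 3 - 8) * (1 - x) := mul_nonneg (by nlinarith [h3l]) (by linarith)
    have hC : (0:ℝ) ≤ Real.sqrt 3 * x := mul_nonneg (Real.sqrt_nonneg 3) h0
    have hD : (0:ℝ) ≤ Real.sqrt 3 * (1 - x) := mul_nonneg (Real.sqrt_nonneg 3) (by linarith)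
    apply max_le <;> apply le_min <;> nlinarith [hA, hB, hC, hD]
  have h1 : volume KE = volume K2 := e2_mp.measure_preimage K2_meas.nullMeasurableSet
  have h2 : volume K2 ≤ volume (regionBetween Glo Fup (Set.Icc 0 1)) := measure_mono K2_sub
  have h3 : volume (regionBetween Glo Fup (Set.Icc 0 1))
      = ENNReal.ofReal (∫ x in Set.Icc (0:ℝ) 1, (Fup - Glo) x) := by
    rw [Measure.volume_eq_prod]
    exact volume_regionBetween_eq_integral Glo_cont.integrableOn_Icc Fup_cont.integrableOn_Icc
      measurableSet_Icc hGF
  have h4 : (∫ x in Set.Icc (0:ℝ) 1, (Fup - Glo) x) ≤ 228/1000 := by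
    have : ∀ x, (Fup - Glo) x = Fup x - Glo x := fun x => rfl
    simp only [this]
    exact intcalc
  rw [h1]
  exact le_trans h2 (h3 ▸ ENNReal.ofReal_le_ofReal h4)

lemma config_sub : config X1 Y1 AA (3/4) (Real.sqrt 3/12) (Real.pi/2) ⊆ KE := by
  have hs3 := s3s3
  have hl := h3l
  have hu := h3u
  have hnn : (0:ℝ) ≤ Real.sqrt 3 := Real.sqrt_nonneg 3
  intro z hz
  rcases hz with (hz | ⟨k, rfl⟩) | ⟨k, rfl⟩
  · simp only [Set.mem_insert_iff, Set.mem_singleton_iff] at hz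
    rcases hz with rfl | rfl
    · rw [pt_mem_KE_iff]
      refine ⟨?_, ?_, ?_, ?_, ?_, ?_⟩ <;> nlinarith
    · rw [pt_mem_KE_iff]
      refine ⟨?_, ?_, ?_, ?_, ?_, ?_⟩ <;> nlinarith
  · fin_cases k
    · show sqVertex X1 Y1 AA 0 ∈ KE
      rw [sq0, pt_mem_KE_iff]
      refine ⟨?_, ?_, ?_, ?_, ?_, ?_⟩ <;> nlinarith
    · show sqVertex X1 Y1 AA 1 ∈ KE
      rw [sq1, pt_mem_KE_iff]
      refine ⟨?_, ?_, ?_, ?_, ?_, ?_⟩ <;> nlinarith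
    · show sqVertex X1 Y1 AA 2 ∈ KE
      rw [sq2, pt_mem_KE_iff]
      refine ⟨?_, ?_, ?_, ?_, ?_, ?_⟩ <;> nlinarith
    · show sqVertex X1 Y1 AA 3 ∈ KE
      rw [sq3, pt_mem_KE_iff]
      refine ⟨?_, ?_, ?_, ?_, ?_, ?_⟩ <;> nlinarith
  · fin_cases k
    · show triVertex (3/4) (Real.sqrt 3/12) (Real.pi/2) 0 ∈ KE
      rw [tri0, pt_mem_KE_iff]
      refine ⟨?_, ?_, ?_, ?_, ?_, ?_⟩ <;> nlinarith
    · show triVertex (3/4) (Real.sqrt 3/12) (Real.pi/2) 1 ∈ KE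
      rw [tri1, pt_mem_KE_iff]
      refine ⟨?_, ?_, ?_, ?_, ?_, ?_⟩ <;> nlinarith
    · show triVertex (3/4) (Real.sqrt 3/12) (Real.pi/2) 2 ∈ KE
      rw [tri2, pt_mem_KE_iff]
      refine ⟨?_, ?_, ?_, ?_, ?_, ?_⟩ <;> nlinarith

lemma area_spec : area X1 Y1 AA (3/4) (Real.sqrt 3/12) (Real.pi/2) ≤ 228/1000 := by
  have hsub := convexHull_min config_sub KE_convex
  have h1 : volume (convexHull ℝ (config X1 Y1 AA (3/4) (Real.sqrt 3/12) (Real.pi/2)))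
      ≤ ENNReal.ofReal (228/1000) := le_trans (measure_mono hsub) KE_vol
  exact ENNReal.toReal_le_of_le_ofReal (by norm_num) h1

lemma key (x1 y1 a x2 y2 b : ℝ)
    (hmin : ∀ x1' y1' a' x2' y2' b' : ℝ,
      area x1 y1 a x2 y2 b ≤ area x1' y1' a' x2' y2' b')
    (w : EuclideanSpace ℝ (Fin 2)) (hw : w ∈ config x1 y1 a x2 y2 b) :
    w 1 ∈ Set.Icc (-0.46 : ℝ) 0.46 := by
  by_contra hcon
  simp only [Set.mem_Icc, not_and_or, not_le] at hcon
  have habs : (0.46:ℝ) < |w 1| := by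
    rcases hcon with h | h
    · calc (0.46:ℝ) < -(w 1) := by linarith
        _ ≤ |w 1| := neg_le_abs _
    · exact lt_of_lt_of_le h (le_abs_self _)
  have hfinite : (config x1 y1 a x2 y2 b).Finite := by
    apply Set.Finite.union
    apply Set.Finite.union
    · exact (Set.finite_singleton _).insert _
    · exact Set.finite_range _
    · exact Set.finite_range _
  have hfin : volume (convexHull ℝ (config x1 y1 a x2 y2 b)) ≠ ⊤ :=
    ((hfinite.isCompact_convexHull ℝ).measure_lt_top).ne
  have htr : ({pt 0 0, pt 1 0, w} : Set (EuclideanSpace ℝ (Fin 2)))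
      ⊆ config x1 y1 a x2 y2 b := by
    intro z hz
    simp only [Set.mem_insert_iff, Set.mem_singleton_iff] at hz
    rcases hz with rfl | rfl | rfl
    · exact Set.mem_union_left _ (Set.mem_union_left _ (by simp))
    · exact Set.mem_union_left _ (Set.mem_union_left _ (by simp))
    · exact hw
  have hlow := le_trans (tri_lower w) (measure_mono (convexHull_mono htr))
  have hlow2 : |w 1|/2 ≤ area x1 y1 a x2 y2 b := by
    have := ENNReal.toReal_mono hfin hlow
    rwa [ENNReal.toReal_ofReal (by positivity)] at this
  have hup := hmin X1 Y1 AA (3/4) (Real.sqrt 3/12) (Real.pi/2)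
  have hsp := area_spec
  linarith

theorem min_config_vertices_bounded (x1 y1 a x2 y2 b : ℝ)
    (hmin : ∀ x1' y1' a' x2' y2' b' : ℝ,
      area x1 y1 a x2 y2 b ≤ area x1' y1' a' x2' y2' b') :
    (∀ k : Fin 4, sqVertex x1 y1 a k 1 ∈ Set.Icc (-0.46 : ℝ) 0.46) ∧
    (∀ k : Fin 3, triVertex x2 y2 b k 1 ∈ Set.Icc (-0.46 : ℝ) 0.46) := by
  constructor
  · intro k
    exact key x1 y1 a x2 y2 b hmin _
      (Set.mem_union_left _ (Set.mem_union_right _ ⟨k, rfl⟩))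
  · intro k
    exact key x1 y1 a x2 y2 b hmin _ (Set.mem_union_right _ ⟨k, rfl⟩)
end

section
/- Suppose every vertex of the square S(x₁,y₁,α) has first coordinate in [0,1] and strictly positive second coordinate, and let y₀ be the minimum of the second coordinates of its four vertices. Then the convex hull of X(x₁, y₁ − y₀, α, x₂, y₂, β) is contained in the convex hull of X(x₁, y₁, α, x₂, y₂, β); in particular μ(x₁, y₁ − y₀, α, x₂, y₂, β) ≤ μ(x₁, y₁, α, x₂, y₂, β), and the translated square touches the segment from E to F. -/
open Real MeasureTheory

lemma pt_fst (x y : ℝ) : pt x y 0 = x := rfl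
lemma pt_snd (x y : ℝ) : pt x y 1 = y := rfl

lemma sq_shift (x1 y1 a c : ℝ) (k : Fin 4) :
    sqVertex x1 (y1 - c) a k = pt (sqVertex x1 y1 a k 0) (sqVertex x1 y1 a k 1 - c) := by
  unfold sqVertex
  simp only [pt_fst, pt_snd]
  congr 1
  ring

lemma pt_mem_seg (x : ℝ) (hx : x ∈ Set.Icc (0:ℝ) 1) :
    pt x 0 ∈ segment ℝ (pt 0 0) (pt 1 0) := by
  refine ⟨1 - x, x, by linarith [hx.2], hx.1, by ring, ?_⟩
  ext i; fin_cases i <;> simp [pt]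

lemma pt_mem_seg' (x y c : ℝ) (hy : 0 < y) (hc0 : 0 ≤ c) (hcy : c ≤ y) :
    pt x (y - c) ∈ segment ℝ (pt x 0) (pt x y) := by
  refine ⟨c / y, (y - c) / y, div_nonneg hc0 hy.le,
    div_nonneg (by linarith) hy.le, by field_simp; ring, ?_⟩
  ext i; fin_cases i <;> simp [pt] <;> field_simp <;> ring

lemma config_finite (x1 y1 a x2 y2 b : ℝ) : (config x1 y1 a x2 y2 b).Finite := by
  unfold config
  exact (((Set.finite_singleton _).insert _).union (Set.finite_range _)).union
    (Set.finite_range _)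

theorem translate_square_down (x1 y1 a x2 y2 b y0 : ℝ)
    (hx : ∀ k : Fin 4, sqVertex x1 y1 a k 0 ∈ Set.Icc (0 : ℝ) 1)
    (hy : ∀ k : Fin 4, 0 < sqVertex x1 y1 a k 1)
    (hy0 : IsLeast {y : ℝ | ∃ k : Fin 4, y = sqVertex x1 y1 a k 1} y0) :
    convexHull ℝ (config x1 (y1 - y0) a x2 y2 b) ⊆
      convexHull ℝ (config x1 y1 a x2 y2 b) ∧
    area x1 (y1 - y0) a x2 y2 b ≤ area x1 y1 a x2 y2 b ∧
    (convexHull ℝ (Set.range (sqVertex x1 (y1 - y0) a)) ∩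
      segment ℝ (pt 0 0) (pt 1 0)).Nonempty := by
  obtain ⟨⟨k0, hk0⟩, hle⟩ := hy0
  have hy0pos : 0 < y0 := hk0 ▸ hy k0
  have hy0le : ∀ k : Fin 4, y0 ≤ sqVertex x1 y1 a k 1 := fun k => hle ⟨k, rfl⟩
  -- the two endpoints of the base segment belong to the hull
  have hE : pt 0 0 ∈ convexHull ℝ (config x1 y1 a x2 y2 b) :=
    subset_convexHull ℝ _ (Or.inl (Or.inl (Or.inl rfl)))
  have hF : pt 1 0 ∈ convexHull ℝ (config x1 y1 a x2 y2 b) :=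
    subset_convexHull ℝ _ (Or.inl (Or.inl (Or.inr rfl)))
  have hconv : Convex ℝ (convexHull ℝ (config x1 y1 a x2 y2 b)) := convex_convexHull ℝ _
  -- every shifted square vertex is in the hull
  have hsq : ∀ k : Fin 4, sqVertex x1 (y1 - y0) a k ∈
      convexHull ℝ (config x1 y1 a x2 y2 b) := by
    intro k
    rw [sq_shift]
    have hbase : pt (sqVertex x1 y1 a k 0) 0 ∈ convexHull ℝ (config x1 y1 a x2 y2 b) :=
      hconv.segment_subset hE hF (pt_mem_seg _ (hx k))
    have htop : pt (sqVertex x1 y1 a k 0) (sqVertex x1 y1 a k 1) ∈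
        convexHull ℝ (config x1 y1 a x2 y2 b) :=
      subset_convexHull ℝ _ (Or.inl (Or.inr ⟨k, rfl⟩))
    exact hconv.segment_subset hbase htop
      (pt_mem_seg' _ _ _ (hy k) hy0pos.le (hy0le k))
  have hsub : config x1 (y1 - y0) a x2 y2 b ⊆ convexHull ℝ (config x1 y1 a x2 y2 b) := by
    rintro p (((h | h) | ⟨k, rfl⟩) | h)
    · exact h ▸ hE
    · exact h ▸ hF
    · exact hsq k
    · exact subset_convexHull ℝ _ (Or.inr h)
  have hhull : convexHull ℝ (config x1 (y1 - y0) a x2 y2 b) ⊆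
      convexHull ℝ (config x1 y1 a x2 y2 b) := convexHull_min hsub hconv
  refine ⟨hhull, ?_, ?_⟩
  · have hfin : volume (convexHull ℝ (config x1 y1 a x2 y2 b)) ≠ ⊤ :=
      ((config_finite x1 y1 a x2 y2 b).isCompact_convexHull ℝ).measure_lt_top.ne
    exact ENNReal.toReal_mono hfin (measure_mono hhull)
  · refine ⟨sqVertex x1 (y1 - y0) a k0, subset_convexHull ℝ _ ⟨k0, rfl⟩, ?_⟩
    have : sqVertex x1 (y1 - y0) a k0 = pt (sqVertex x1 y1 a k0 0) 0 := by
      rw [sq_shift, hk0, sub_self]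
    rw [this]
    exact pt_mem_seg _ (hx k0)
end

section
/- Let d₁ ≥ 0 and 0 ≤ d₂ ≤ 2π, and let (x, y, γ) and (δ₁, δ₂, θ) be real triples with |δ₁| ≤ d₁/2, |δ₂| ≤ d₁/2 and |θ| ≤ d₂/2. Then for each k = 0,1,2, the distance between the k-th vertex of T(x+δ₁, y+δ₂, γ+θ) and the k-th vertex of T(x, y, γ) is at most d₁/√2 + sin(d₂/4)/√3; and for each k = 0,1,2,3, the distance between the k-th vertex of S(x+δ₁, y+δ₂, γ+θ) and the k-th vertex of S(x, y, γ) is at most d₁/√2 + (√2/3)·sin(d₂/4). -/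
open Real MeasureTheory

lemma dist_pt (a b c d : ℝ) : dist (pt a b) (pt c d) = Real.sqrt ((a-c)^2 + (b-d)^2) := by
  simp [pt, EuclideanSpace.dist_eq, Fin.sum_univ_two, Real.dist_eq, sq_abs]

lemma key_s10 (d1 d2 δ1 δ2 θ r x y A : ℝ) (hr : 0 ≤ r)
    (hd2' : d2 ≤ 2 * Real.pi)
    (h1 : |δ1| ≤ d1 / 2) (h2 : |δ2| ≤ d1 / 2) (h3 : |θ| ≤ d2 / 2) :
    dist (pt (x + δ1 + r * Real.cos (A + θ)) (y + δ2 + r * Real.sin (A + θ)))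
      (pt (x + r * Real.cos A) (y + r * Real.sin A)) ≤
      d1 / Real.sqrt 2 + 2 * r * Real.sin (d2 / 4) := by
  have hd1 : 0 ≤ d1 := by have := abs_nonneg δ1; linarith
  have hd20 : 0 ≤ d2 := by have := abs_nonneg θ; linarith
  have tri := dist_triangle
    (pt (x + δ1 + r * Real.cos (A + θ)) (y + δ2 + r * Real.sin (A + θ)))
    (pt (x + δ1 + r * Real.cos A) (y + δ2 + r * Real.sin A))
    (pt (x + r * Real.cos A) (y + r * Real.sin A))
  rw [dist_pt, dist_pt, dist_pt] at tri
  -- leg 2 : translation part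
  have leg2 : Real.sqrt ((x + δ1 + r * Real.cos A - (x + r * Real.cos A))^2 +
      (y + δ2 + r * Real.sin A - (y + r * Real.sin A))^2) ≤ d1 / Real.sqrt 2 := by
    have e1 : (x + δ1 + r * Real.cos A - (x + r * Real.cos A)) = δ1 := by ring
    have e2 : (y + δ2 + r * Real.sin A - (y + r * Real.sin A)) = δ2 := by ring
    rw [e1, e2]
    have hle : δ1^2 + δ2^2 ≤ d1^2 / 2 := by
      have a1 : δ1^2 ≤ (d1/2)^2 := by
        have := sq_abs δ1; nlinarith [abs_nonneg δ1]
      have a2 : δ2^2 ≤ (d1/2)^2 := by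
        have := sq_abs δ2; nlinarith [abs_nonneg δ2]
      nlinarith
    calc Real.sqrt (δ1^2 + δ2^2) ≤ Real.sqrt (d1^2 / 2) := Real.sqrt_le_sqrt hle
      _ = d1 / Real.sqrt 2 := by
          rw [Real.sqrt_div (sq_nonneg d1), Real.sqrt_sq hd1]
  -- leg 1 : rotation part
  have leg1 : Real.sqrt ((x + δ1 + r * Real.cos (A + θ) - (x + δ1 + r * Real.cos A))^2 +
      (y + δ2 + r * Real.sin (A + θ) - (y + δ2 + r * Real.sin A))^2) ≤
      2 * r * Real.sin (d2 / 4) := by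
    have hc : Real.cos θ = Real.cos (A + θ) * Real.cos A + Real.sin (A + θ) * Real.sin A := by
      rw [← Real.cos_sub]; ring_nf
    have hsq : Real.sin (θ/2)^2 = 1/2 - Real.cos θ / 2 := by
      have h := Real.sin_sq_eq_half_sub (θ/2)
      rw [show 2*(θ/2) = θ by ring] at h
      linarith
    have echord : (x + δ1 + r * Real.cos (A + θ) - (x + δ1 + r * Real.cos A))^2 +
        (y + δ2 + r * Real.sin (A + θ) - (y + δ2 + r * Real.sin A))^2 =
        (2 * r)^2 * Real.sin (θ/2)^2 := by
      have s1 := Real.sin_sq_add_cos_sq A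
      have s2 := Real.sin_sq_add_cos_sq (A + θ)
      linear_combination r^2 * s1 + r^2 * s2 + 2*r^2*hc - 4*r^2*hsq
    rw [echord, Real.sqrt_mul (sq_nonneg _), Real.sqrt_sq (by linarith : (0:ℝ) ≤ 2*r),
      Real.sqrt_sq_eq_abs]
    have hmono : |Real.sin (θ/2)| ≤ Real.sin (d2/4) := by
      have hpi := Real.pi_pos
      have hab := abs_le.mp h3
      have hm := Real.strictMonoOn_sin.monotoneOn
      have hmem1 : θ/2 ∈ Set.Icc (-(Real.pi/2)) (Real.pi/2) :=
        ⟨by linarith [hab.1], by linarith [hab.2]⟩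
      have hmem2 : d2/4 ∈ Set.Icc (-(Real.pi/2)) (Real.pi/2) :=
        ⟨by linarith, by linarith⟩
      have hmem3 : -(d2/4) ∈ Set.Icc (-(Real.pi/2)) (Real.pi/2) :=
        ⟨by linarith, by linarith⟩
      refine abs_le.mpr ⟨?_, hm hmem1 hmem2 (by linarith [hab.2])⟩
      have := hm hmem3 hmem1 (by linarith [hab.1])
      rwa [Real.sin_neg] at this
    calc 2 * r * |Real.sin (θ/2)| ≤ 2 * r * Real.sin (d2/4) := by
          apply mul_le_mul_of_nonneg_left hmono (by linarith)
      _ = 2 * r * Real.sin (d2/4) := rfl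
  rw [dist_pt]; linarith

theorem vertex_perturbation_bound (d1 d2 x y γ δ1 δ2 θ : ℝ)
    (hd1 : 0 ≤ d1) (hd2 : 0 ≤ d2) (hd2' : d2 ≤ 2 * Real.pi)
    (h1 : |δ1| ≤ d1 / 2) (h2 : |δ2| ≤ d1 / 2) (h3 : |θ| ≤ d2 / 2) :
    (∀ k : Fin 3, dist (triVertex (x + δ1) (y + δ2) (γ + θ) k) (triVertex x y γ k) ≤
      d1 / Real.sqrt 2 + Real.sin (d2 / 4) / Real.sqrt 3) ∧
    (∀ k : Fin 4, dist (sqVertex (x + δ1) (y + δ2) (γ + θ) k) (sqVertex x y γ k) ≤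
      d1 / Real.sqrt 2 + Real.sqrt 2 / 3 * Real.sin (d2 / 4)) := by
  constructor
  · intro k
    simp only [triVertex]
    set c : ℝ := ((k:ℕ):ℝ) * (2 * Real.pi / 3) with hc
    rw [show γ + θ + c = (γ + c) + θ by ring]
    have hkey := key_s10 d1 d2 δ1 δ2 θ (Real.sqrt 3 / 6) x y (γ + c) (by positivity) hd2' h1 h2 h3
    have heq : Real.sin (d2/4) / Real.sqrt 3 = 2 * (Real.sqrt 3 / 6) * Real.sin (d2 / 4) := by
      have h33 : Real.sqrt 3 * Real.sqrt 3 = 3 := Real.mul_self_sqrt (by norm_num)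
      have hne : Real.sqrt 3 ≠ 0 := by positivity
      field_simp
      linear_combination (-2 : ℝ) * Real.sin (d2/4) * h33
    rw [heq]
    exact hkey
  · intro k
    simp only [sqVertex]
    set c : ℝ := ((k:ℕ):ℝ) * (Real.pi / 2) with hc
    rw [show γ + θ + c = (γ + c) + θ by ring]
    have hkey := key_s10 d1 d2 δ1 δ2 θ (Real.sqrt 2 / 6) x y (γ + c) (by positivity) hd2' h1 h2 h3
    have heq : Real.sqrt 2 / 3 * Real.sin (d2/4) = 2 * (Real.sqrt 2 / 6) * Real.sin (d2 / 4) := by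
      ring
    rw [heq]
    exact hkey
end

section
/- For every point c ∈ ℝ² with ‖c‖ ≥ 1/6, the 2-dimensional Lebesgue measure of the convex hull of {(0,0)} ∪ B̄(c, 1/6) is at least √(‖c‖²/36 − 1/1296), where B̄(c, 1/6) is the closed disk of radius 1/6 centered at c. -/
open Real MeasureTheory

theorem hull_disk_origin_area (c : EuclideanSpace ℝ (Fin 2)) (hc : 1 / 6 ≤ ‖c‖) :
    (volume (convexHull ℝ ({(0 : EuclideanSpace ℝ (Fin 2))} ∪
        Metric.closedBall c (1 / 6)))).toReal ≥
      Real.sqrt (‖c‖ ^ 2 / 36 - 1 / 1296) := by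
  set r := ‖c‖ with hr_def
  have hr0 : (0:ℝ) < r := lt_of_lt_of_le (by norm_num) hc
  set s : ℝ := 1 / (6 * r) with hs_def
  have hs0 : 0 < s := by positivity
  set K := convexHull ℝ ({(0 : EuclideanSpace ℝ (Fin 2))} ∪ Metric.closedBall c (1/6)) with hK
  set c0 := c 0 with hc0
  set c1 := c 1 with hc1
  have hnorm : c0 ^ 2 + c1 ^ 2 = r ^ 2 := by
    have h := EuclideanSpace.norm_eq c
    rw [Fin.sum_univ_two] at h
    rw [hr_def, h, Real.sq_sqrt (by positivity)]
    simp [hc0, hc1, sq_abs]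
  set w : EuclideanSpace ℝ (Fin 2) := pt (-c1) c0 with hw
  have hw_apply0 : w 0 = -c1 := rfl
  have hw_apply1 : w 1 = c0 := rfl
  have hwnorm : ‖w‖ = r := by
    have h := EuclideanSpace.norm_eq w
    rw [Fin.sum_univ_two] at h
    rw [h, hw_apply0, hw_apply1]
    rw [show ‖(-c1 : ℝ)‖^2 + ‖c0‖^2 = c0^2 + c1^2 by simp [sq_abs]; ring, hnorm,
      Real.sqrt_sq hr0.le]
  -- the linear map
  set eL := WithLp.linearEquiv 2 ℝ (Fin 2 → ℝ) with heL
  set M : Matrix (Fin 2) (Fin 2) ℝ := !![c0, -c1; c1, c0] with hM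
  set L : EuclideanSpace ℝ (Fin 2) →ₗ[ℝ] EuclideanSpace ℝ (Fin 2) :=
    (eL.symm : (Fin 2 → ℝ) →ₗ[ℝ] EuclideanSpace ℝ (Fin 2)) ∘ₗ Matrix.toLin' M ∘ₗ
      (eL : EuclideanSpace ℝ (Fin 2) →ₗ[ℝ] (Fin 2 → ℝ)) with hL
  have hdet : LinearMap.det L = r ^ 2 := by
    have h1 : LinearMap.det L = LinearMap.det (Matrix.toLin' M) := by
      have := LinearMap.det_conj (Matrix.toLin' M) eL.symm
      simpa [hL] using this
    rw [h1, LinearMap.det_toLin', hM, Matrix.det_fin_two_of]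
    nlinarith [hnorm]
  have hLapp : ∀ x : EuclideanSpace ℝ (Fin 2), L x = x 0 • c + x 1 • w := by
    intro x
    ext i
    have : L x i = Matrix.mulVec M (fun j => x j) i := rfl
    rw [this]
    fin_cases i <;>
      simp [Matrix.mulVec, dotProduct, Fin.sum_univ_two, hM, PiLp.add_apply,
        PiLp.smul_apply, smul_eq_mul, hw_apply0, hw_apply1, hc0, hc1] <;> ring
  -- the region
  set e : EuclideanSpace ℝ (Fin 2) ≃ᵐ ℝ × ℝ :=
    (MeasurableEquiv.toLp 2 (Fin 2 → ℝ)).symm.trans MeasurableEquiv.finTwoArrow with he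
  have hMP : MeasurePreserving e :=
    (volume_preserving_finTwoArrow ℝ).comp (EuclideanSpace.volume_preserving_symm_measurableEquiv_toLp (Fin 2))
  set f : ℝ → ℝ := fun x => -(s * x) with hf
  set g : ℝ → ℝ := fun x => s * x with hg
  set R' : Set (ℝ × ℝ) := regionBetween f g (Set.Ioc 0 1) with hR'
  set R : Set (EuclideanSpace ℝ (Fin 2)) := e ⁻¹' R' with hR
  have he_apply : ∀ p : EuclideanSpace ℝ (Fin 2), e p = (p 0, p 1) := fun p => rfl
  -- image of region inside hull
  have hRK : L '' R ⊆ K := by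
    rintro _ ⟨p, hp, rfl⟩
    have hp' : p 0 ∈ Set.Ioc (0:ℝ) 1 ∧ p 1 ∈ Set.Ioo (f (p 0)) (g (p 0)) := by
      have := hp
      rw [hR, Set.mem_preimage, he_apply, hR'] at this
      exact this
    obtain ⟨ha, hb⟩ := hp'
    set a := p 0
    set b := p 1
    have ha0 : 0 < a := ha.1
    have hab : |b| ≤ s * a := by
      rw [abs_le]
      constructor
      · have h1 : -(s * a) < b := hb.1
        linarith
      · have h2 : b < s * a := hb.2
        linarith
    set y := c + (b / a) • w with hy
    have hyK : y ∈ K := by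
      apply subset_convexHull
      right
      rw [Metric.mem_closedBall, hy]
      have : dist (c + (b / a) • w) c = ‖(b/a) • w‖ := by
        rw [dist_eq_norm]; congr 1; abel
      rw [this, norm_smul, hwnorm]
      have h1 : ‖(b/a : ℝ)‖ = |b| / a := by
        rw [Real.norm_eq_abs, abs_div, abs_of_pos ha0]
      rw [h1]
      have : |b| / a ≤ s := by
        rw [div_le_iff₀ ha0]
        exact hab
      calc |b| / a * r ≤ s * r := by nlinarith
        _ = 1 / 6 := by rw [hs_def]; field_simp
    have h0K : (0 : EuclideanSpace ℝ (Fin 2)) ∈ K := by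
      apply subset_convexHull; left; rfl
    have hLp : L p = a • y := by
      rw [hLapp, hy, smul_add, smul_smul]
      rw [mul_div_cancel₀ b (ne_of_gt ha0)]
    rw [hLp]
    exact (convex_convexHull ℝ _).smul_mem_of_zero_mem h0K hyK ⟨ha0.le, ha.2⟩
  -- volume of region
  have hfc : Continuous f := by fun_prop
  have hgc : Continuous g := by fun_prop
  have hvolR' : volume R' = ENNReal.ofReal s := by
    rw [hR', Measure.volume_eq_prod, volume_regionBetween_eq_integral
      (hfc.integrableOn_Ioc) (hgc.integrableOn_Ioc) measurableSet_Ioc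
      (fun x hx => by rw [hf, hg]; simp only; nlinarith [hx.1, hs0])]
    congr 1
    have : ∀ x : ℝ, (g - f) x = (2 * s) * x := by
      intro x; simp [hf, hg]; ring
    rw [show (fun y => (g - f) y) = fun y => (2*s) * y by funext x; exact this x]
    rw [← intervalIntegral.integral_of_le (zero_le_one)]
    rw [intervalIntegral.integral_const_mul, integral_id]
    ring
  have hvolR : volume R = ENNReal.ofReal s := by
    rw [hR, hMP.measure_preimage
      ((measurableSet_regionBetween hfc.measurable hgc.measurable measurableSet_Ioc)).nullMeasurableSet]
    exact hvolR'
  have himg : volume (L '' R) = ENNReal.ofReal (r / 6) := by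
    rw [Measure.addHaar_image_linearMap, hdet, hvolR, abs_of_pos (by positivity : (0:ℝ) < r^2),
      ← ENNReal.ofReal_mul (by positivity)]
    congr 1
    rw [hs_def]; field_simp
  have hmain : ENNReal.ofReal (r / 6) ≤ volume K := himg ▸ measure_mono hRK
  -- finiteness
  have hKfin : volume K ≠ ⊤ := by
    have hb : Bornology.IsBounded ({(0 : EuclideanSpace ℝ (Fin 2))} ∪ Metric.closedBall c (1/6)) :=
      Bornology.isBounded_singleton.union Metric.isBounded_closedBall
    exact ((isBounded_convexHull.mpr hb).measure_lt_top).ne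
  -- conclude
  have hfinal : r / 6 ≤ (volume K).toReal := by
    have := ENNReal.toReal_mono hKfin hmain
    rwa [ENNReal.toReal_ofReal (by positivity)] at this
  refine le_trans ?_ hfinal
  calc Real.sqrt (r ^ 2 / 36 - 1 / 1296) ≤ Real.sqrt ((r/6)^2) :=
        Real.sqrt_le_sqrt (by nlinarith)
    _ = r / 6 := Real.sqrt_sq (by positivity)
end

section
/- For every point c ∈ ℝ² with ‖c‖² ≥ 1.4, the 2-dimensional Lebesgue measure of the convex hull of {(0,0)} ∪ B̄(c, 1/6) is greater than 0.23, where B̄(c, 1/6) is the closed disk of radius 1/6 centered at c. -/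
open Real MeasureTheory

local notation "E2" => EuclideanSpace ℝ (Fin 2)

lemma linf_isLinear (p q : ℝ) : IsLinearMap ℝ (fun x : E2 => p * x 0 + q * x 1) := by
  constructor
  · intro a b; show p * (a 0 + b 0) + q * (a 1 + b 1) = _; ring
  · intro m a; show p * (m * a 0) + q * (m * a 1) = m * (p * a 0 + q * a 1); ring

lemma null_line (p q R : ℝ) (hpq : p ≠ 0 ∨ q ≠ 0) :
    volume {x : E2 | p * x 0 + q * x 1 = R} = 0 := by
  set f : E2 →ₗ[ℝ] ℝ := (linf_isLinear p q).mk' _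
  obtain ⟨v, hv⟩ : ∃ v : E2, p * v 0 + q * v 1 = R := by
    rcases hpq with hp | hq
    · exact ⟨pt (R/p) 0, by simp [pt]; field_simp⟩
    · exact ⟨pt 0 (R/q), by simp [pt]; field_simp⟩
  have hker : LinearMap.ker f ≠ ⊤ := by
    intro h
    rcases hpq with hp | hq
    · have : pt 1 0 ∈ LinearMap.ker f := h ▸ Submodule.mem_top
      rw [LinearMap.mem_ker] at this
      simp [f, IsLinearMap.mk'_apply, pt] at this
      exact hp this
    · have : pt 0 1 ∈ LinearMap.ker f := h ▸ Submodule.mem_top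
      rw [LinearMap.mem_ker] at this
      simp [f, IsLinearMap.mk'_apply, pt] at this
      exact hq this
  have hset : {x : E2 | p * x 0 + q * x 1 = R}
      = (fun x : E2 => -v + x) ⁻¹' (LinearMap.ker f : Set E2) := by
    ext x
    simp only [Set.mem_setOf_eq, Set.mem_preimage, SetLike.mem_coe, LinearMap.mem_ker]
    constructor
    · intro hx
      show p * (-v + x) 0 + q * (-v + x) 1 = 0
      have h0 : (-v + x) 0 = -(v 0) + x 0 := rfl
      have h1 : (-v + x) 1 = -(v 1) + x 1 := rfl
      rw [h0, h1]; nlinarith [hx, hv]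
    · intro hx
      have : p * (-(v 0) + x 0) + q * (-(v 1) + x 1) = 0 := hx
      nlinarith [this, hv]
  rw [hset, measure_preimage_add]
  exact Measure.addHaar_submodule volume _ hker

lemma coord_measurable (i : Fin 2) : Measurable (fun x : E2 => x i) :=
  (measurable_pi_apply i).comp ((MeasurableEquiv.toLp 2 (Fin 2 → ℝ)).symm).measurable

def stdTri : Set E2 := {x | 0 ≤ x 0 ∧ 0 ≤ x 1 ∧ x 0 + x 1 ≤ 1}

lemma stdTri_measurable : MeasurableSet stdTri := by
  have h0 : MeasurableSet {x : E2 | 0 ≤ x 0} := measurableSet_le measurable_const (coord_measurable 0)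
  have h1 : MeasurableSet {x : E2 | 0 ≤ x 1} := measurableSet_le measurable_const (coord_measurable 1)
  have h2 : MeasurableSet {x : E2 | x 0 + x 1 ≤ 1} :=
    measurableSet_le ((coord_measurable 0).add (coord_measurable 1)) measurable_const
  exact (h0.inter (h1.inter h2))

lemma stdTri_convex : Convex ℝ stdTri := by
  intro x hx y hy a b ha hb hab
  obtain ⟨hx0, hx1, hx2⟩ := hx
  obtain ⟨hy0, hy1, hy2⟩ := hy
  refine ⟨?_, ?_, ?_⟩
  · show 0 ≤ a * x 0 + b * y 0; nlinarith
  · show 0 ≤ a * x 1 + b * y 1; nlinarith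
  · show (a * x 0 + b * y 0) + (a * x 1 + b * y 1) ≤ 1; nlinarith

lemma stdTri_eq : convexHull ℝ {(0:E2), pt 1 0, pt 0 1} = stdTri := by
  apply le_antisymm
  · apply convexHull_min _ stdTri_convex
    intro z hz
    rcases hz with h | h | h <;> subst h <;>
      exact ⟨by norm_num [pt, stdTri], by norm_num [pt, stdTri], by norm_num [pt, stdTri]⟩
  · intro x hx
    obtain ⟨hx0, hx1, hx2⟩ := hx
    have := Finset.centerMass_mem_convexHull (Finset.univ : Finset (Fin 3))
      (w := ![1 - x 0 - x 1, x 0, x 1]) (z := ![(0:E2), pt 1 0, pt 0 1])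
      (by intro i _; fin_cases i <;> simp <;> linarith)
      (by simp [Fin.sum_univ_three]; linarith)
      (s := {(0:E2), pt 1 0, pt 0 1}) (by intro i _; fin_cases i <;> simp)
    convert this using 1
    rw [Finset.centerMass]
    simp [Fin.sum_univ_three]
    ext i
    fin_cases i <;> simp [pt] <;> ring

lemma vol_stdTri : volume stdTri = ENNReal.ofReal (1/2) := by
  classical
  set R : Set E2 := {x | x 0 ≤ 1 ∧ x 1 ≤ 1 ∧ 1 ≤ x 0 + x 1} with hRdef
  -- R is the image of stdTri under the homothety of ratio -1 centered at (1/2, 1/2)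
  have himg : (AffineMap.homothety (pt (1/2) (1/2)) (-1 : ℝ)) '' stdTri = R := by
    ext x
    constructor
    · rintro ⟨y, hy, rfl⟩
      obtain ⟨h0, h1, h2⟩ := hy
      have e0 : (AffineMap.homothety (pt (1/2) (1/2)) (-1 : ℝ) y) 0 = 1 - y 0 := by
        simp [AffineMap.homothety_apply, pt]
        ring
      have e1 : (AffineMap.homothety (pt (1/2) (1/2)) (-1 : ℝ) y) 1 = 1 - y 1 := by
        simp [AffineMap.homothety_apply, pt]
        ring
      refine ⟨by rw [e0]; linarith, by rw [e1]; linarith, by rw [e0, e1]; linarith⟩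
    · intro hx
      obtain ⟨h0, h1, h2⟩ := hx
      refine ⟨AffineMap.homothety (pt (1/2) (1/2)) (-1 : ℝ) x, ?_, ?_⟩
      · have e0 : (AffineMap.homothety (pt (1/2) (1/2)) (-1 : ℝ) x) 0 = 1 - x 0 := by
          show (-1 : ℝ) * (x 0 - pt (1/2) (1/2) 0) + pt (1/2) (1/2) 0 = 1 - x 0
          simp [pt]; ring
        have e1 : (AffineMap.homothety (pt (1/2) (1/2)) (-1 : ℝ) x) 1 = 1 - x 1 := by
          show (-1 : ℝ) * (x 1 - pt (1/2) (1/2) 1) + pt (1/2) (1/2) 1 = 1 - x 1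
          simp [pt]; ring
        exact ⟨by rw [e0]; linarith, by rw [e1]; linarith, by rw [e0, e1]; linarith⟩
      · ext i
        show (-1 : ℝ) * ((-1 : ℝ) * (x i - pt (1/2) (1/2) i) + pt (1/2) (1/2) i - pt (1/2) (1/2) i) + pt (1/2) (1/2) i = x i
        ring
  have hvolR : volume R = volume stdTri := by
    rw [← himg, Measure.addHaar_image_homothety]
    norm_num [finrank_euclideanSpace_fin]
  have hunion : stdTri ∪ R = {x : E2 | x 0 ∈ Set.Icc (0:ℝ) 1 ∧ x 1 ∈ Set.Icc (0:ℝ) 1} := by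
    ext x
    simp only [Set.mem_union, Set.mem_setOf_eq, Set.mem_Icc, stdTri]
    constructor
    · rintro (⟨h0, h1, h2⟩ | ⟨h0, h1, h2⟩) <;> exact ⟨⟨by linarith, by linarith⟩, ⟨by linarith, by linarith⟩⟩
    · rintro ⟨⟨h0, h1⟩, ⟨h2, h3⟩⟩
      by_cases h : x 0 + x 1 ≤ 1
      · exact Or.inl ⟨h0, h2, h⟩
      · exact Or.inr ⟨h1, h3, by linarith⟩
  have hsq : volume {x : E2 | x 0 ∈ Set.Icc (0:ℝ) 1 ∧ x 1 ∈ Set.Icc (0:ℝ) 1} = 1 := by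
    have hpre : {x : E2 | x 0 ∈ Set.Icc (0:ℝ) 1 ∧ x 1 ∈ Set.Icc (0:ℝ) 1}
        = ((MeasurableEquiv.toLp 2 (Fin 2 → ℝ)).symm) ⁻¹' (Set.univ.pi fun _ : Fin 2 => Set.Icc (0:ℝ) 1) := by
      ext x
      simp only [Set.mem_preimage, Set.mem_univ_pi, Set.mem_setOf_eq]
      have h0 : ((MeasurableEquiv.toLp 2 (Fin 2 → ℝ)).symm) x 0 = x 0 := rfl
      have h1 : ((MeasurableEquiv.toLp 2 (Fin 2 → ℝ)).symm) x 1 = x 1 := rfl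
      constructor
      · rintro ⟨ha, hb⟩ i
        fin_cases i
        · exact ha
        · exact hb
      · intro h
        exact ⟨h0 ▸ h 0, h1 ▸ h 1⟩
    rw [hpre, (EuclideanSpace.volume_preserving_symm_measurableEquiv_toLp (Fin 2)).measure_preimage
      (MeasurableSet.univ_pi fun _ => measurableSet_Icc).nullMeasurableSet]
    rw [volume_pi_pi]
    simp [Real.volume_Icc]
  have hdisj : volume (stdTri ∩ R) = 0 := by
    refine measure_mono_null ?_ (null_line 1 1 1 (Or.inl one_ne_zero))
    rintro x ⟨⟨_, _, h2⟩, ⟨_, _, h2'⟩⟩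
    show (1:ℝ) * x 0 + 1 * x 1 = 1
    linarith
  have hRmeas : MeasurableSet R := by
    have h0 : MeasurableSet {x : E2 | x 0 ≤ 1} := measurableSet_le (coord_measurable 0) measurable_const
    have h1 : MeasurableSet {x : E2 | x 1 ≤ 1} := measurableSet_le (coord_measurable 1) measurable_const
    have h2 : MeasurableSet {x : E2 | 1 ≤ x 0 + x 1} :=
      measurableSet_le measurable_const ((coord_measurable 0).add (coord_measurable 1))
    exact h0.inter (h1.inter h2)
  have key : volume (stdTri ∪ R) = volume stdTri + volume R :=
    measure_union₀ hRmeas.nullMeasurableSet hdisj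
  rw [hunion, hsq, hvolR] at key
  have hfin : volume stdTri ≠ ⊤ := by
    intro h; rw [h] at key; simp at key
  have h2 : (2:ENNReal) * volume stdTri = 1 := by rw [two_mul, key]
  have hv : volume stdTri = 2⁻¹ := by
    have : volume stdTri = 2⁻¹ * ((2:ENNReal) * volume stdTri) := by
      rw [← mul_assoc, ENNReal.inv_mul_cancel (by norm_num) (by norm_num), one_mul]
    rw [this, h2, mul_one]
  rw [hv, show (1:ℝ)/2 = (2⁻¹:ℝ) by norm_num, ENNReal.ofReal_inv_of_pos two_pos,
    ENNReal.ofReal_ofNat]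

lemma vol_triangle (a b : E2) :
    volume (convexHull ℝ {(0:E2), a, b}) = ENNReal.ofReal (|a 0 * b 1 - a 1 * b 0| / 2) := by
  classical
  set L : E2 →ₗ[ℝ] E2 :=
    { toFun := fun x => x 0 • a + x 1 • b
      map_add' := by
        intro x y
        show (x + y) 0 • a + (x + y) 1 • b = (x 0 • a + x 1 • b) + (y 0 • a + y 1 • b)
        have h0 : (x + y) 0 = x 0 + y 0 := rfl
        have h1 : (x + y) 1 = x 1 + y 1 := rfl
        rw [h0, h1, add_smul, add_smul]
        abel
      map_smul' := by
        intro m x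
        show (m • x) 0 • a + (m • x) 1 • b = (RingHom.id ℝ) m • (x 0 • a + x 1 • b)
        have h0 : (m • x) 0 = m * x 0 := rfl
        have h1 : (m • x) 1 = m * x 1 := rfl
        rw [h0, h1, RingHom.id_apply, smul_add, mul_smul, mul_smul] } with hL
  have hdet : LinearMap.det L = a 0 * b 1 - a 1 * b 0 := by
    have hm : LinearMap.toMatrix (PiLp.basisFun 2 ℝ (Fin 2)) (PiLp.basisFun 2 ℝ (Fin 2)) L
        = !![a 0, b 0; a 1, b 1] := by
      ext i j
      rw [LinearMap.toMatrix_apply, PiLp.basisFun_repr]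
      fin_cases i <;> fin_cases j <;>
        simp [hL, PiLp.basisFun_apply, PiLp.toLp_apply, Pi.single] <;> rfl
    rw [← LinearMap.det_toMatrix (PiLp.basisFun 2 ℝ (Fin 2)), hm, Matrix.det_fin_two]
    simp
    ring
  have himg : ⇑L '' (convexHull ℝ {(0:E2), pt 1 0, pt 0 1}) = convexHull ℝ {(0:E2), a, b} := by
    have e0 : L (pt 1 0) = a := by
      show (pt 1 0 : E2) 0 • a + (pt 1 0 : E2) 1 • b = a
      norm_num [pt]
    have e1 : L (pt 0 1) = b := by
      show (pt 0 1 : E2) 0 • a + (pt 0 1 : E2) 1 • b = b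
      norm_num [pt]
    have ez : L 0 = 0 := by simp
    calc ⇑L '' (convexHull ℝ {(0:E2), pt 1 0, pt 0 1})
        = convexHull ℝ (⇑L '' {(0:E2), pt 1 0, pt 0 1}) := by
          rw [← LinearMap.coe_toAffineMap, AffineMap.image_convexHull]
      _ = convexHull ℝ {(0:E2), a, b} := by
          rw [Set.image_insert_eq, Set.image_insert_eq, Set.image_singleton, ez, e0, e1]
  rw [← himg, Measure.addHaar_image_linearMap, stdTri_eq, vol_stdTri, hdet,
    ← ENNReal.ofReal_mul (abs_nonneg _)]
  rw [mul_one_div]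

lemma det_isLinear (p0 p1 : ℝ) : IsLinearMap ℝ (fun x : E2 => p0 * x 1 - p1 * x 0) := by
  constructor
  · intro a b; show p0 * (a 1 + b 1) - p1 * (a 0 + b 0) = _; ring
  · intro m a; show p0 * (m * a 1) - p1 * (m * a 0) = m * (p0 * a 1 - p1 * a 0); ring

lemma tri_aedisjoint (p0 p1 : ℝ) (w1 w2 z1 z2 : E2) (hp : p0 ≠ 0 ∨ p1 ≠ 0)
    (h1 : p0 * w1 1 - p1 * w1 0 ≤ 0) (h2 : p0 * w2 1 - p1 * w2 0 ≤ 0)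
    (h3 : 0 ≤ p0 * z1 1 - p1 * z1 0) (h4 : 0 ≤ p0 * z2 1 - p1 * z2 0) :
    volume (convexHull ℝ {(0:E2), w1, w2} ∩ convexHull ℝ {(0:E2), z1, z2}) = 0 := by
  have hline : {x : E2 | (-p1) * x 0 + p0 * x 1 = 0} = {x : E2 | p0 * x 1 - p1 * x 0 = 0} := by
    ext x
    constructor
    · intro h
      have hh : -p1 * x 0 + p0 * x 1 = 0 := h
      show p0 * x 1 - p1 * x 0 = 0
      linarith
    · intro h
      have hh : p0 * x 1 - p1 * x 0 = 0 := h
      show -p1 * x 0 + p0 * x 1 = 0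
      linarith
  have hp' : (-p1) ≠ 0 ∨ p0 ≠ 0 := by
    rcases hp with h | h
    · exact Or.inr h
    · exact Or.inl (by simpa using h)
  refine measure_mono_null ?_ (hline ▸ null_line (-p1) p0 0 hp')
  have hsub1 : convexHull ℝ {(0:E2), w1, w2} ⊆ {x : E2 | p0 * x 1 - p1 * x 0 ≤ 0} := by
    apply convexHull_min _ (convex_halfSpace_le (det_isLinear p0 p1) 0)
    rintro x (rfl | rfl | rfl)
    · show p0 * (0:E2) 1 - p1 * (0:E2) 0 ≤ 0
      show p0 * 0 - p1 * 0 ≤ 0; norm_num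
    · exact h1
    · exact h2
  have hsub2 : convexHull ℝ {(0:E2), z1, z2} ⊆ {x : E2 | 0 ≤ p0 * x 1 - p1 * x 0} := by
    apply convexHull_min _ (convex_halfSpace_ge (det_isLinear p0 p1) 0)
    rintro x (rfl | rfl | rfl)
    · show 0 ≤ p0 * (0:E2) 1 - p1 * (0:E2) 0
      show 0 ≤ p0 * 0 - p1 * 0; norm_num
    · exact h3
    · exact h4
  rintro x ⟨hx1, hx2⟩
  exact le_antisymm (hsub1 hx1) (hsub2 hx2)

set_option maxHeartbeats 1000000 in
theorem main_aux (c : EuclideanSpace ℝ (Fin 2)) (d e0 e1 t : ℝ) (hd : 1.18 ≤ d)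
    (he : e0 ^ 2 + e1 ^ 2 = 1) (ht2 : 2 * t ^ 2 = 1) (htl : 0.707 ≤ t) (htu : t ≤ 0.708)
    (hc0 : c 0 = d * e0) (hc1 : c 1 = d * e1) :
    (volume (convexHull ℝ ({(0 : EuclideanSpace ℝ (Fin 2))} ∪
        Metric.closedBall c (1 / 6)))).toReal > 0.23 := by
  have hpt0 : ∀ x y : ℝ, pt x y 0 = x := fun x y => by simp [pt]
  have hpt1 : ∀ x y : ℝ, pt x y 1 = y := fun x y => by simp [pt]
  have hdpos : (0:ℝ) < d := by linarith
  have htpos : (0:ℝ) < t := by linarith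
  have hdt_u : d * t ≤ d * 0.708 := mul_le_mul_of_nonneg_left htu (le_of_lt hdpos)
  have hdt_l : d * 0.707 ≤ d * t := mul_le_mul_of_nonneg_left htl (le_of_lt hdpos)
  have hd_u1 : d * 0.708 ≤ d := by nlinarith
  have hdtpos : 0 < d * t := mul_pos hdpos htpos
  have hd2pos : 0 < d ^ 2 := pow_pos hdpos 2
  -- the five vertices (v3 is unused)
  set v1 : E2 := pt (d*e0 + e1/6) (d*e1 - e0/6) with hv1
  set v2 : E2 := pt (d*e0 + (t/6)*(e0+e1)) (d*e1 + (t/6)*(e1-e0)) with hv2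
  set v4 : E2 := pt (d*e0 + (t/6)*(e0-e1)) (d*e1 + (t/6)*(e1+e0)) with hv4
  set v5 : E2 := pt (d*e0 - e1/6) (d*e1 + e0/6) with hv5
  -- memberships in the closed ball
  have hm1 : v1 ∈ Metric.closedBall c (1/6) := by
    rw [Metric.mem_closedBall, EuclideanSpace.dist_eq, Fin.sum_univ_two, Real.dist_eq,
      Real.dist_eq, sq_abs, sq_abs, hv1, hpt0, hpt1, hc0, hc1]
    rw [show (d * e0 + e1 / 6 - d * e0)^2 + (d * e1 - e0 / 6 - d * e1)^2 = (1/6)^2 by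
      linear_combination (1/36) * he]
    rw [Real.sqrt_sq (by norm_num)]
  have hm2 : v2 ∈ Metric.closedBall c (1/6) := by
    rw [Metric.mem_closedBall, EuclideanSpace.dist_eq, Fin.sum_univ_two, Real.dist_eq,
      Real.dist_eq, sq_abs, sq_abs, hv2, hpt0, hpt1, hc0, hc1]
    rw [show (d * e0 + (t/6)*(e0+e1) - d * e0)^2 + (d * e1 + (t/6)*(e1-e0) - d * e1)^2
        = (1/6)^2 by linear_combination (t^2/18) * he + (1/36) * ht2]
    rw [Real.sqrt_sq (by norm_num)]
  have hm4 : v4 ∈ Metric.closedBall c (1/6) := by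
    rw [Metric.mem_closedBall, EuclideanSpace.dist_eq, Fin.sum_univ_two, Real.dist_eq,
      Real.dist_eq, sq_abs, sq_abs, hv4, hpt0, hpt1, hc0, hc1]
    rw [show (d * e0 + (t/6)*(e0-e1) - d * e0)^2 + (d * e1 + (t/6)*(e1+e0) - d * e1)^2
        = (1/6)^2 by linear_combination (t^2/18) * he + (1/36) * ht2]
    rw [Real.sqrt_sq (by norm_num)]
  have hm5 : v5 ∈ Metric.closedBall c (1/6) := by
    rw [Metric.mem_closedBall, EuclideanSpace.dist_eq, Fin.sum_univ_two, Real.dist_eq,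
      Real.dist_eq, sq_abs, sq_abs, hv5, hpt0, hpt1, hc0, hc1]
    rw [show (d * e0 - e1 / 6 - d * e0)^2 + (d * e1 + e0 / 6 - d * e1)^2 = (1/6)^2 by
      linear_combination (1/36) * he]
    rw [Real.sqrt_sq (by norm_num)]
  -- determinants
  have hD12 : v1 0 * v2 1 - v1 1 * v2 0 = d/6 - d*t/6 + t/36 := by
    rw [hv1, hv2, hpt0, hpt1, hpt0, hpt1]
    linear_combination (d/6 - d*t/6 + t/36) * he
  have hD24 : v2 0 * v4 1 - v2 1 * v4 0 = d*t/3 + t^2/18 := by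
    rw [hv2, hv4, hpt0, hpt1, hpt0, hpt1]
    linear_combination (d*t/3 + t^2/18) * he
  have hD45 : v4 0 * v5 1 - v4 1 * v5 0 = d/6 - d*t/6 + t/36 := by
    rw [hv4, hv5, hpt0, hpt1, hpt0, hpt1]
    linear_combination (d/6 - d*t/6 + t/36) * he
  have hD25 : v2 0 * v5 1 - v2 1 * v5 0 = d/6 + d*t/6 + t/36 := by
    rw [hv2, hv5, hpt0, hpt1, hpt0, hpt1]
    linear_combination (d/6 + d*t/6 + t/36) * he
  have hval2 : v2 0 ^ 2 + v2 1 ^ 2 = d^2 + d*t/3 + t^2/18 := by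
    rw [hv2, hpt0, hpt1]
    linear_combination (d^2 + d*t/3 + t^2/18) * he
  have hval4 : v4 0 ^ 2 + v4 1 ^ 2 = d^2 + d*t/3 + t^2/18 := by
    rw [hv4, hpt0, hpt1]
    linear_combination (d^2 + d*t/3 + t^2/18) * he
  clear hv1 hv2 hv4 hv5
  clear_value v1 v2 v4 v5
  have hD12nn : (0:ℝ) ≤ d/6 - d*t/6 + t/36 := by linarith
  have hD24nn : (0:ℝ) ≤ d*t/3 + t^2/18 := by linarith [ht2]
  have hD25nn : (0:ℝ) ≤ d/6 + d*t/6 + t/36 := by linarith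
  -- nonvanishing of v2 and v4
  have hv2sq : 0 < v2 0 ^ 2 + v2 1 ^ 2 := by
    rw [hval2]; linarith [ht2]
  have hv4sq : 0 < v4 0 ^ 2 + v4 1 ^ 2 := by
    rw [hval4]; linarith [ht2]
  have hv2ne : v2 0 ≠ 0 ∨ v2 1 ≠ 0 := by
    rcases eq_or_ne (v2 0) 0 with h | h
    · right; intro h1; rw [h, h1] at hv2sq; norm_num at hv2sq
    · left; exact h
  have hv4ne : v4 0 ≠ 0 ∨ v4 1 ≠ 0 := by
    rcases eq_or_ne (v4 0) 0 with h | h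
    · right; intro h1; rw [h, h1] at hv4sq; norm_num at hv4sq
    · left; exact h
  -- the three triangles
  set T1 : Set E2 := convexHull ℝ {(0:E2), v1, v2} with hT1
  set T2 : Set E2 := convexHull ℝ {(0:E2), v2, v4} with hT2
  set T3 : Set E2 := convexHull ℝ {(0:E2), v4, v5} with hT3
  -- pairwise a.e. disjointness
  have h12 : volume (T1 ∩ T2) = 0 := by
    refine tri_aedisjoint (v2 0) (v2 1) v1 v2 v2 v4 hv2ne ?_ (le_of_eq (by ring)) (le_of_eq (by ring)) ?_
    · linarith [hD12, hD12nn]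
    · linarith [hD24, hD24nn]
  have h13 : volume (T1 ∩ T3) = 0 := by
    refine tri_aedisjoint (v2 0) (v2 1) v1 v2 v4 v5 hv2ne ?_ (le_of_eq (by ring)) ?_ ?_
    · linarith [hD12, hD12nn]
    · linarith [hD24, hD24nn]
    · linarith [hD25, hD25nn]
  have h23 : volume (T2 ∩ T3) = 0 := by
    refine tri_aedisjoint (v4 0) (v4 1) v2 v4 v4 v5 hv4ne ?_ (le_of_eq (by ring)) (le_of_eq (by ring)) ?_
    · linarith [hD24, hD24nn]
    · linarith [hD45, hD12nn]
  -- measurability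
  have hT2m : NullMeasurableSet T2 volume :=
    (((Set.toFinite _).isCompact_convexHull ℝ).isClosed.measurableSet).nullMeasurableSet
  have hT3m : NullMeasurableSet T3 volume :=
    (((Set.toFinite _).isCompact_convexHull ℝ).isClosed.measurableSet).nullMeasurableSet
  -- volume of the union
  have hvol_union : volume (T1 ∪ T2 ∪ T3) = volume T1 + volume T2 + volume T3 := by
    rw [measure_union₀ hT3m (by
      refine MeasureTheory.AEDisjoint.union_left ?_ ?_
      · exact h13
      · exact h23)]
    rw [measure_union₀ hT2m h12]
  have hvolT1 : volume T1 = ENNReal.ofReal ((d/6 - d*t/6 + t/36)/2) := by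
    rw [hT1, vol_triangle, hD12, abs_of_nonneg hD12nn]
  have hvolT2 : volume T2 = ENNReal.ofReal ((d*t/3 + t^2/18)/2) := by
    rw [hT2, vol_triangle, hD24, abs_of_nonneg hD24nn]
  have hvolT3 : volume T3 = ENNReal.ofReal ((d/6 - d*t/6 + t/36)/2) := by
    rw [hT3, vol_triangle, hD45, abs_of_nonneg hD12nn]
  -- the union is inside the hull
  set K : Set E2 := convexHull ℝ ({(0 : E2)} ∪ Metric.closedBall c (1 / 6)) with hK
  have hsub : T1 ∪ T2 ∪ T3 ⊆ K := by
    have s1 : T1 ⊆ K := convexHull_mono (by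
      rintro x (rfl | rfl | rfl)
      · exact Or.inl rfl
      · exact Or.inr hm1
      · exact Or.inr hm2)
    have s2 : T2 ⊆ K := convexHull_mono (by
      rintro x (rfl | rfl | rfl)
      · exact Or.inl rfl
      · exact Or.inr hm2
      · exact Or.inr hm4)
    have s3 : T3 ⊆ K := convexHull_mono (by
      rintro x (rfl | rfl | rfl)
      · exact Or.inl rfl
      · exact Or.inr hm4
      · exact Or.inr hm5)
    exact Set.union_subset (Set.union_subset s1 s2) s3
  -- finiteness
  have hfin : volume K ≠ ⊤ := by
    refine (Bornology.IsBounded.measure_lt_top ?_).ne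
    rw [hK]
    exact isBounded_convexHull.mpr
      ((Bornology.isBounded_singleton).union Metric.isBounded_closedBall)
  -- assemble
  set S : ℝ := (d/6 - d*t/6 + t/36)/2 + (d*t/3 + t^2/18)/2 + (d/6 - d*t/6 + t/36)/2 with hS
  have hSle : ENNReal.ofReal S ≤ volume K := by
    calc ENNReal.ofReal S
        = volume T1 + volume T2 + volume T3 := by
          rw [hvolT1, hvolT2, hvolT3, hS,
            ENNReal.ofReal_add (by positivity) (by positivity),
            ENNReal.ofReal_add (by positivity) (by positivity)]
      _ = volume (T1 ∪ T2 ∪ T3) := hvol_union.symm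
      _ ≤ volume K := measure_mono hsub
  have hS23 : (0.23:ℝ) < S := by rw [hS]; linarith [ht2]
  have : S ≤ (volume K).toReal := by
    calc S = (ENNReal.ofReal S).toReal := (ENNReal.toReal_ofReal (by positivity)).symm
      _ ≤ (volume K).toReal := ENNReal.toReal_mono hfin hSle
  exact lt_of_lt_of_le hS23 this

theorem hull_disk_origin_area_far (c : EuclideanSpace ℝ (Fin 2)) (hc : 1.4 ≤ ‖c‖ ^ 2) :
    (volume (convexHull ℝ ({(0 : EuclideanSpace ℝ (Fin 2))} ∪
        Metric.closedBall c (1 / 6)))).toReal > 0.23 := by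
  have hd0 : (0:ℝ) ≤ ‖c‖ := norm_nonneg c
  have hd : 1.18 ≤ ‖c‖ := by nlinarith
  have hdpos : (0:ℝ) < ‖c‖ := by linarith
  have hs2 : Real.sqrt 2 ^ 2 = 2 := Real.sq_sqrt (by norm_num)
  have hs2nn : 0 ≤ Real.sqrt 2 := Real.sqrt_nonneg 2
  have hnormsq : ‖c‖ ^ 2 = c 0 ^ 2 + c 1 ^ 2 := by
    rw [EuclideanSpace.norm_eq, Real.sq_sqrt (by positivity), Fin.sum_univ_two,
      Real.norm_eq_abs, Real.norm_eq_abs, sq_abs, sq_abs]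
  refine main_aux c ‖c‖ (c 0 / ‖c‖) (c 1 / ‖c‖) (Real.sqrt 2 / 2) hd ?_ (by nlinarith)
    (by nlinarith) (by nlinarith) (by field_simp) (by field_simp)
  field_simp
  linarith
end

section
/- If π/4 ≤ α ≤ π/2 and π/3 ≤ β ≤ 2π/3, and moreover α ≥ 78π/180, or β ≤ 83π/180, or β ≥ 97π/180, then μ(x₁,y₁,α,x₂,y₂,β) > 0.23 for all real x₁, y₁, x₂, y₂. -/
open Real MeasureTheory

/-! ### Auxiliary material -/

open Set

/-- The linear map sending the standard triangle to the triangle `(0,0), (1,0), (p,q)`. -/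
noncomputable def Lmap (p q : ℝ) : (ℝ × ℝ) →ₗ[ℝ] (ℝ × ℝ) where
  toFun z := (z.1 + p * z.2, q * z.2)
  map_add' x y := by simp [Prod.ext_iff]; constructor <;> ring
  map_smul' c x := by simp [Prod.ext_iff, smul_eq_mul]; constructor <;> ring

lemma Lmap_det (p q : ℝ) : LinearMap.det (Lmap p q) = q := by
  rw [← LinearMap.det_toMatrix (Module.Basis.finTwoProd ℝ), Matrix.det_fin_two]
  simp [LinearMap.toMatrix_apply, Lmap, Module.Basis.finTwoProd]

noncomputable def T0 : Set (ℝ × ℝ) := regionBetween (fun _ => 0) (fun x => 1 - x) (Set.Ioo 0 1)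

lemma T0_vol : volume T0 = ENNReal.ofReal (1/2 : ℝ) := by
  rw [T0, Measure.volume_eq_prod, volume_regionBetween_eq_integral]
  · congr 1
    have h1 : ∀ y : ℝ, ((fun x : ℝ => 1 - x) - fun _ : ℝ => (0:ℝ)) y = 1 - y := by
      intro y; simp
    rw [MeasureTheory.integral_congr_ae (Filter.Eventually.of_forall h1)]
    have : ∫ y in Ioo (0:ℝ) 1, (1 - y) = ∫ y in (0:ℝ)..1, (1 - y) := by
      rw [intervalIntegral.integral_of_le zero_le_one, MeasureTheory.integral_Ioc_eq_integral_Ioo]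
    rw [this]
    rw [intervalIntegral.integral_sub intervalIntegrable_const
      intervalIntegral.intervalIntegrable_id]
    simp
    norm_num
  · exact integrableOn_const (by simp)
  · exact ((continuous_const.sub continuous_id).integrableOn_Icc (a := (0:ℝ)) (b := 1)).mono_set
      Ioo_subset_Icc_self
  · exact measurableSet_Ioo
  · intro x hx; simp at hx; linarith [hx.2]

lemma T0_subset {K : Set (ℝ × ℝ)} (hK : Convex ℝ K) (h0 : ((0:ℝ),(0:ℝ)) ∈ K)
    (h1 : ((1:ℝ),(0:ℝ)) ∈ K) {p q : ℝ} (hpq : (p, q) ∈ K) :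
    (Lmap p q) '' T0 ⊆ K := by
  rintro _ ⟨⟨u, v⟩, huv, rfl⟩
  obtain ⟨hu, hv⟩ : (u ∈ Ioo (0:ℝ) 1) ∧ v ∈ Ioo (0:ℝ) (1 - u) := huv
  simp only [mem_Ioo] at hu hv
  have huv0 : 0 < u + v := by linarith [hu.1, hv.1]
  have hw : ((u/(u+v)) • ((1:ℝ),(0:ℝ)) + (v/(u+v)) • (p, q)) ∈ K :=
    hK h1 hpq (div_nonneg hu.1.le huv0.le) (div_nonneg hv.1.le huv0.le) (by field_simp)
  have := hK h0 hw (a := 1 - (u+v)) (b := u+v) (by linarith [hv.2]) huv0.le (by ring)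
  convert this using 1
  show (Lmap p q) (u, v) = _
  simp only [Lmap, LinearMap.coe_mk, AddHom.coe_mk, Prod.smul_mk, smul_eq_mul, Prod.mk_add_mk]
  rw [Prod.ext_iff]
  constructor
  · show u + p * v = _; field_simp; ring
  · show q * v = _; field_simp; ring

lemma tri_piece {K : Set (ℝ × ℝ)} (hK : Convex ℝ K) (h0 : ((0:ℝ),(0:ℝ)) ∈ K)
    (h1 : ((1:ℝ),(0:ℝ)) ∈ K) {p q : ℝ} (hpq : (p, q) ∈ K) :
    ∃ S : Set (ℝ × ℝ), S ⊆ K ∧ (∀ z ∈ S, ∃ v : ℝ, 0 < v ∧ z.2 = q * v) ∧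
      volume S = ENNReal.ofReal (|q|/2) := by
  refine ⟨(Lmap p q) '' T0, T0_subset hK h0 h1 hpq, ?_, ?_⟩
  · rintro _ ⟨⟨u, v⟩, huv, rfl⟩
    obtain ⟨hu, hv⟩ : (u ∈ Ioo (0:ℝ) 1) ∧ v ∈ Ioo (0:ℝ) (1 - u) := huv
    exact ⟨v, hv.1, rfl⟩
  · rw [Measure.addHaar_image_linearMap, Lmap_det, T0_vol, ← ENNReal.ofReal_mul (abs_nonneg q)]
    congr 1; ring

lemma vol_lower {K : Set (ℝ × ℝ)} (hK : Convex ℝ K) (h0 : ((0:ℝ),(0:ℝ)) ∈ K)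
    (h1 : ((1:ℝ),(0:ℝ)) ∈ K) {p q r s : ℝ} (hP : (p, q) ∈ K) (hQ : (r, s) ∈ K) :
    ENNReal.ofReal ((q - s)/2) ≤ volume K := by
  rcases le_or_gt (q - s) 0 with hqs | hqs
  · rw [ENNReal.ofReal_of_nonpos (by linarith)]; exact zero_le
  rcases le_or_gt 0 s with hs | hs
  · obtain ⟨S, hSK, _, hSvol⟩ := tri_piece hK h0 h1 hP
    calc ENNReal.ofReal ((q - s)/2) ≤ ENNReal.ofReal (|q|/2) := by
          apply ENNReal.ofReal_le_ofReal
          have : q - s ≤ |q| := by rcases abs_cases q with ⟨h,_⟩|⟨h,_⟩ <;> linarith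
          linarith
      _ = volume S := hSvol.symm
      _ ≤ volume K := measure_mono hSK
  rcases le_or_gt q 0 with hq | hq
  · obtain ⟨S, hSK, _, hSvol⟩ := tri_piece hK h0 h1 hQ
    calc ENNReal.ofReal ((q - s)/2) ≤ ENNReal.ofReal (|s|/2) := by
          apply ENNReal.ofReal_le_ofReal
          have : q - s ≤ |s| := by rcases abs_cases s with ⟨h,_⟩|⟨h,_⟩ <;> linarith
          linarith
      _ = volume S := hSvol.symm
      _ ≤ volume K := measure_mono hSK
  · obtain ⟨S1, hS1K, hS1pos, hS1vol⟩ := tri_piece hK h0 h1 hP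
    obtain ⟨S2, hS2K, hS2pos, hS2vol⟩ := tri_piece hK h0 h1 hQ
    have hU : MeasurableSet {z : ℝ × ℝ | 0 < z.2} :=
      measurableSet_lt measurable_const measurable_snd
    have key : volume S1 + volume S2 ≤ volume K := by
      have h1' : volume S1 ≤ volume (K ∩ {z : ℝ × ℝ | 0 < z.2}) := by
        apply measure_mono
        intro z hz
        obtain ⟨v, hv, hzv⟩ := hS1pos z hz
        exact ⟨hS1K hz, by simp only [mem_setOf_eq, hzv]; positivity⟩
      have h2' : volume S2 ≤ volume (K \ {z : ℝ × ℝ | 0 < z.2}) := by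
        apply measure_mono
        intro z hz
        obtain ⟨v, hv, hzv⟩ := hS2pos z hz
        refine ⟨hS2K hz, ?_⟩
        simp only [mem_setOf_eq, hzv, not_lt]
        nlinarith
      calc volume S1 + volume S2 ≤ volume (K ∩ {z : ℝ × ℝ | 0 < z.2}) +
            volume (K \ {z : ℝ × ℝ | 0 < z.2}) := add_le_add h1' h2'
        _ = volume K := measure_inter_add_diff K hU
    rw [hS1vol, hS2vol, abs_of_pos hq, abs_of_neg hs, ← ENNReal.ofReal_add (by linarith)
      (by linarith)] at key
    calc ENNReal.ofReal ((q - s)/2) = ENNReal.ofReal (q/2 + -s/2) := by ring_nf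
      _ ≤ volume K := key

noncomputable def phi : EuclideanSpace ℝ (Fin 2) ≃ᵐ ℝ × ℝ :=
  (MeasurableEquiv.toLp 2 (Fin 2 → ℝ)).symm.trans MeasurableEquiv.finTwoArrow

lemma phi_mp : MeasurePreserving phi volume volume :=
  (volume_preserving_finTwoArrow ℝ).comp (EuclideanSpace.volume_preserving_symm_measurableEquiv_toLp (Fin 2))

noncomputable def psi : EuclideanSpace ℝ (Fin 2) →ₗ[ℝ] ℝ × ℝ :=
  LinearMap.prod ((LinearMap.proj 0).comp (WithLp.linearEquiv 2 ℝ (Fin 2 → ℝ)).toLinearMap)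
    ((LinearMap.proj 1).comp (WithLp.linearEquiv 2 ℝ (Fin 2 → ℝ)).toLinearMap)

lemma main_bound (x1 y1 a x2 y2 b : ℝ) {P Q : EuclideanSpace ℝ (Fin 2)}
    (hP : P ∈ config x1 y1 a x2 y2 b) (hQ : Q ∈ config x1 y1 a x2 y2 b) :
    (P 1 - Q 1) / 2 ≤ area x1 y1 a x2 y2 b := by
  set C := config x1 y1 a x2 y2 b with hC
  have hfin : C.Finite := by
    rw [hC, config]
    exact (((Set.finite_singleton _).insert _).union (Set.finite_range _)).union
      (Set.finite_range _)
  have hcomp : IsCompact (convexHull ℝ C) := hfin.isCompact_convexHull (𝕜 := ℝ)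
  have hmeas : MeasurableSet (convexHull ℝ C) := hcomp.isClosed.measurableSet
  have hnetop : volume (convexHull ℝ C) ≠ ⊤ := hcomp.measure_lt_top.ne
  have himg : volume (phi '' convexHull ℝ C) = volume (convexHull ℝ C) := by
    rw [show phi '' convexHull ℝ C = phi.symm ⁻¹' (convexHull ℝ C) from
      phi.toEquiv.image_eq_preimage_symm _]
    exact (phi_mp.symm phi).measure_preimage hmeas.nullMeasurableSet
  have hhull : phi '' convexHull ℝ C = convexHull ℝ (phi '' C) := by
    show ⇑psi '' convexHull ℝ C = convexHull ℝ (⇑psi '' C)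
    exact psi.image_convexHull C
  have hsub : ∀ z ∈ C, phi z ∈ convexHull ℝ (phi '' C) := fun z hz =>
    subset_convexHull ℝ _ ⟨z, hz, rfl⟩
  have h00 : ((0:ℝ), (0:ℝ)) ∈ convexHull ℝ (phi '' C) := by
    have := hsub (pt 0 0) (by rw [hC, config]; exact Or.inl (Or.inl (Or.inl rfl)))
    simpa [phi, pt] using this
  have h10 : ((1:ℝ), (0:ℝ)) ∈ convexHull ℝ (phi '' C) := by
    have := hsub (pt 1 0) (by rw [hC, config]; exact Or.inl (Or.inl (Or.inr rfl)))
    simpa [phi, pt] using this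
  have hPK : (P 0, P 1) ∈ convexHull ℝ (phi '' C) := hsub P hP
  have hQK : (Q 0, Q 1) ∈ convexHull ℝ (phi '' C) := hsub Q hQ
  have key := vol_lower (convex_convexHull ℝ (phi '' C)) h00 h10 hPK hQK
  rw [← hhull, himg] at key
  rcases le_or_gt ((P 1 - Q 1) / 2) 0 with hle | _
  · exact hle.trans ENNReal.toReal_nonneg
  · exact (ENNReal.ofReal_le_iff_le_toReal hnetop).mp key

lemma sin_mono_cmp {x y : ℝ} (hx : 0 ≤ x) (hxy : x ≤ y) (hy : y ≤ π/2) :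
    Real.sin x ≤ Real.sin y := by
  have hpi := Real.pi_pos
  exact Real.strictMonoOn_sin.monotoneOn ⟨by linarith, by linarith⟩ ⟨by linarith, hy⟩ hxy

lemma sin67 : (0.9203 : ℝ) < Real.sin (67 * π / 180) := by
  have h314 : (3.141592 : ℝ) < π := Real.pi_gt_d6
  have h315 : π < 3.15 := Real.pi_lt_d2
  have hsplit : Real.sin (67 * π / 180) =
      Real.sin (π/3) * Real.cos (7*π/180) + Real.cos (π/3) * Real.sin (7*π/180) := by
    rw [← Real.sin_add]; congr 1; ring
  have hc1 : (0.122173 : ℝ) < 7*π/180 := by linarith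
  have hc2 : (7*π/180 : ℝ) < 0.1225 := by linarith
  have hcos : 1 - (7*π/180)^2/2 ≤ Real.cos (7*π/180) := Real.one_sub_sq_div_two_le_cos
  have hsin : 7*π/180 - (7*π/180)^3/4 < Real.sin (7*π/180) :=
    by have := Real.sin_gt_sub_cube (x := 7*π/180) (by linarith); have : 0 < (7*π/180)^3 := by positivity
       linarith
  have hcosv : (0.992496 : ℝ) ≤ Real.cos (7*π/180) := by nlinarith
  have hsinv : (0.121713 : ℝ) ≤ Real.sin (7*π/180) := by nlinarith
  have hs3 : (1.732 : ℝ) ≤ Real.sqrt 3 := by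
    nlinarith [Real.sq_sqrt (by norm_num : (3:ℝ) ≥ 0), Real.sqrt_nonneg 3]
  rw [hsplit, Real.sin_pi_div_three, Real.cos_pi_div_three]
  nlinarith [mul_le_mul_of_nonneg_left hcosv (by positivity : (0:ℝ) ≤ Real.sqrt 3 / 2)]

theorem outside_K1_large_area (x1 y1 a x2 y2 b : ℝ)
    (ha : Real.pi / 4 ≤ a) (ha' : a ≤ Real.pi / 2)
    (hb : Real.pi / 3 ≤ b) (hb' : b ≤ 2 * Real.pi / 3)
    (h : 78 * Real.pi / 180 ≤ a ∨ b ≤ 83 * Real.pi / 180 ∨ 97 * Real.pi / 180 ≤ b) :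
    area x1 y1 a x2 y2 b > 0.23 := by
  have hpi := Real.pi_pos
  have hs3sq : Real.sqrt 3 * Real.sqrt 3 = 3 := Real.mul_self_sqrt (by norm_num)
  rcases h with hcase | hcase | hcase
  · -- square case
    have hmP : sqVertex x1 y1 a 0 ∈ config x1 y1 a x2 y2 b := by
      rw [config]; exact Or.inl (Or.inr ⟨0, rfl⟩)
    have hmQ : sqVertex x1 y1 a 2 ∈ config x1 y1 a x2 y2 b := by
      rw [config]; exact Or.inl (Or.inr ⟨2, rfl⟩)
    have key := main_bound x1 y1 a x2 y2 b hmP hmQ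
    have hP1 : (sqVertex x1 y1 a 0) 1 = y1 + Real.sqrt 2 / 6 * Real.sin a := by
      simp [sqVertex, pt]
    have hQ1 : (sqVertex x1 y1 a 2) 1 = y1 - Real.sqrt 2 / 6 * Real.sin a := by
      simp only [sqVertex, pt]
      norm_num
      rw [show a + 2 * (π/2) = a + π by ring, Real.sin_add_pi]
      ring
    rw [hP1, hQ1, show (y1 + Real.sqrt 2 / 6 * Real.sin a -
      (y1 - Real.sqrt 2 / 6 * Real.sin a)) / 2 = Real.sqrt 2 / 6 * Real.sin a by ring] at key
    have hsa : Real.sin (78*π/180) ≤ Real.sin a := by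
      apply sin_mono_cmp (by positivity) (by linarith) ha'
    have h78 : Real.sin (78*π/180) = Real.cos (π/15) := by
      rw [← Real.cos_pi_div_two_sub]; congr 1; ring
    have hcos : 1 - (π/15)^2/2 ≤ Real.cos (π/15) := Real.one_sub_sq_div_two_le_cos
    have h315 : π < 3.15 := Real.pi_lt_d2
    have hsv : (0.97795 : ℝ) ≤ Real.sin a := by rw [h78] at hsa; nlinarith
    have hs2 : (1.4142 : ℝ) ≤ Real.sqrt 2 := by
      nlinarith [Real.sq_sqrt (by norm_num : (2:ℝ) ≥ 0), Real.sqrt_nonneg 2]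
    have : (0.23 : ℝ) < Real.sqrt 2 / 6 * Real.sin a := by
      nlinarith [mul_le_mul_of_nonneg_left hsv (by positivity : (0:ℝ) ≤ Real.sqrt 2 / 6)]
    linarith
  · -- triangle case, b small
    have hmP : triVertex x2 y2 b 0 ∈ config x1 y1 a x2 y2 b := by
      rw [config]; exact Or.inr ⟨0, rfl⟩
    have hmQ : triVertex x2 y2 b 2 ∈ config x1 y1 a x2 y2 b := by
      rw [config]; exact Or.inr ⟨2, rfl⟩
    have key := main_bound x1 y1 a x2 y2 b hmP hmQ
    have hP1 : (triVertex x2 y2 b 0) 1 = y2 + Real.sqrt 3 / 6 * Real.sin b := by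
      simp [triVertex, pt]
    have hQ1 : (triVertex x2 y2 b 2) 1
        = y2 + Real.sqrt 3 / 6 * (-(Real.sin b * (1/2) + Real.cos b * (Real.sqrt 3/2))) := by
      simp only [triVertex, pt]
      norm_num
      rw [show b + 2 * (2*π/3) = (b + π/3) + π by ring, Real.sin_add_pi, Real.sin_add,
        Real.cos_pi_div_three, Real.sin_pi_div_three]
      ring
    have hrw : (y2 + Real.sqrt 3 / 6 * Real.sin b -
        (y2 + Real.sqrt 3 / 6 * (-(Real.sin b * (1/2) + Real.cos b * (Real.sqrt 3/2))))) / 2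
        = (1/4) * Real.sin (b + π/6) := by
      rw [Real.sin_add, Real.cos_pi_div_six, Real.sin_pi_div_six]
      linear_combination (Real.cos b / 24) * hs3sq
    rw [hP1, hQ1, hrw] at key
    have hflip : Real.sin (b + π/6) = Real.sin (5*π/6 - b) := by
      rw [← Real.sin_pi_sub]; congr 1; ring
    have hmono : Real.sin (67*π/180) ≤ Real.sin (5*π/6 - b) := by
      apply sin_mono_cmp (by positivity) (by linarith) (by linarith)
    have := sin67
    rw [hflip] at key
    linarith
  · -- triangle case, b large
    have hmP : triVertex x2 y2 b 0 ∈ config x1 y1 a x2 y2 b := by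
      rw [config]; exact Or.inr ⟨0, rfl⟩
    have hmQ : triVertex x2 y2 b 1 ∈ config x1 y1 a x2 y2 b := by
      rw [config]; exact Or.inr ⟨1, rfl⟩
    have key := main_bound x1 y1 a x2 y2 b hmP hmQ
    have hP1 : (triVertex x2 y2 b 0) 1 = y2 + Real.sqrt 3 / 6 * Real.sin b := by
      simp [triVertex, pt]
    have hQ1 : (triVertex x2 y2 b 1) 1
        = y2 + Real.sqrt 3 / 6 * (-(Real.sin b * (1/2) - Real.cos b * (Real.sqrt 3/2))) := by
      simp only [triVertex, pt]
      norm_num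
      rw [show b + 2*π/3 = (b - π/3) + π by ring, Real.sin_add_pi, Real.sin_sub,
        Real.cos_pi_div_three, Real.sin_pi_div_three]
      ring
    have hrw : (y2 + Real.sqrt 3 / 6 * Real.sin b -
        (y2 + Real.sqrt 3 / 6 * (-(Real.sin b * (1/2) - Real.cos b * (Real.sqrt 3/2))))) / 2
        = (1/4) * Real.sin (b - π/6) := by
      rw [Real.sin_sub, Real.cos_pi_div_six, Real.sin_pi_div_six]
      linear_combination (-(Real.cos b) / 24) * hs3sq
    rw [hP1, hQ1, hrw] at key
    have hmono : Real.sin (67*π/180) ≤ Real.sin (b - π/6) := by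
      apply sin_mono_cmp (by positivity) (by linarith) (by linarith)
    have := sin67
    linarith
end

section
/- For every real α with π/4 ≤ α ≤ 74.838·π/180, one has (1/6)·((1/2)·cos(α − 80.504·π/180) + cos(α − π/4)) ≥ 0.2274987. -/
open Real

lemma sin_taylor_lb {x : ℝ} (h0 : 0 ≤ x) (h1 : x ≤ 1) :
    x - x ^ 3 / 6 - x ^ 4 * (5 / 96) ≤ Real.sin x := by
  have h := Real.sin_bound (x := x) (by rwa [abs_of_nonneg h0])
  rw [abs_of_nonneg h0] at h
  have h' := abs_le.mp h
  nlinarith [h'.1, mul_le_of_le_one_right (pow_nonneg h0 4) h1, pow_nonneg h0 4]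

lemma sin_taylor_ub {x : ℝ} (h0 : 0 ≤ x) (h1 : x ≤ 1) :
    Real.sin x ≤ x - x ^ 3 / 6 + x ^ 4 * (5 / 96) := by
  have h := Real.sin_bound (x := x) (by rwa [abs_of_nonneg h0])
  rw [abs_of_nonneg h0] at h
  have h' := abs_le.mp h
  nlinarith [h'.2, mul_le_of_le_one_right (pow_nonneg h0 4) h1, pow_nonneg h0 4]

lemma cos_taylor_lb {x : ℝ} (h0 : 0 ≤ x) (h1 : x ≤ 1) :
    1 - x ^ 2 / 2 - x ^ 4 * (5 / 96) ≤ Real.cos x := by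
  have h := Real.cos_bound (x := x) (by rwa [abs_of_nonneg h0])
  rw [abs_of_nonneg h0] at h
  have h' := abs_le.mp h
  linarith [h'.1]

lemma cos_taylor_ub {x : ℝ} (h0 : 0 ≤ x) (h1 : x ≤ 1) :
    Real.cos x ≤ 1 - x ^ 2 / 2 + x ^ 4 * (5 / 96) := by
  have h := Real.cos_bound (x := x) (by rwa [abs_of_nonneg h0])
  rw [abs_of_nonneg h0] at h
  have h' := abs_le.mp h
  linarith [h'.2]

lemma cos_dbl (y : ℝ) : Real.cos (2 * y) = 1 - 2 * Real.sin y ^ 2 := by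
  have h := Real.sin_sq_add_cos_sq y
  rw [Real.cos_two_mul']
  linarith

set_option maxHeartbeats 2000000 in
lemma num_cos_q1 : (4975571356129/5000000000000 : ℝ) ≤ Real.cos (5.666 * 3.14159265358979323847 / 180) := by
  have hx0 : (0:ℝ) ≤ (5.666 * 3.14159265358979323847 / 180 / 2) := by norm_num
  have hx1 : ((5.666 * 3.14159265358979323847 / 180 / 2) : ℝ) ≤ 1 := by norm_num
  have hs0l : (123561797313/2500000000000 : ℝ) ≤ Real.sin (5.666 * 3.14159265358979323847 / 180 / 2) := le_trans (by norm_num) (sin_taylor_lb hx0 hx1)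
  have hs0u : Real.sin (5.666 * 3.14159265358979323847 / 180 / 2) ≤ (247126707737/5000000000000 : ℝ) := le_trans (sin_taylor_ub hx0 hx1) (by norm_num)
  have hc0l : (624235797431/625000000000 : ℝ) ≤ Real.cos (5.666 * 3.14159265358979323847 / 180 / 2) := le_trans (by norm_num) (cos_taylor_lb hx0 hx1)
  have hc0u : Real.cos (5.666 * 3.14159265358979323847 / 180 / 2) ≤ (4993889492559/5000000000000 : ℝ) := le_trans (cos_taylor_ub hx0 hx1) (by norm_num)
  have heq1 : ((5.666 * 3.14159265358979323847 / 180) : ℝ) = 2 * (5.666 * 3.14159265358979323847 / 180 / 2) := by norm_num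
  rw [heq1, cos_dbl]; nlinarith [hs0l, hs0u]

set_option maxHeartbeats 2000000 in
lemma num_cos_q2 : (4337177979977/5000000000000 : ℝ) ≤ Real.cos (29.838 * 3.14159265358979323847 / 180) := by
  have hx0 : (0:ℝ) ≤ (29.838 * 3.14159265358979323847 / 180 / 32) := by norm_num
  have hx1 : ((29.838 * 3.14159265358979323847 / 180 / 32) : ℝ) ≤ 1 := by norm_num
  have hs0l : (81366912171/5000000000000 : ℝ) ≤ Real.sin (29.838 * 3.14159265358979323847 / 180 / 32) := le_trans (by norm_num) (sin_taylor_lb hx0 hx1)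
  have hs0u : Real.sin (29.838 * 3.14159265358979323847 / 180 / 32) ≤ (162733897409/10000000000000 : ℝ) := le_trans (sin_taylor_ub hx0 hx1) (by norm_num)
  have hc0l : (9998675731089/10000000000000 : ℝ) ≤ Real.cos (29.838 * 3.14159265358979323847 / 180 / 32) := le_trans (by norm_num) (cos_taylor_lb hx0 hx1)
  have hc0u : Real.cos (29.838 * 3.14159265358979323847 / 180 / 32) ≤ (2499668951039/2500000000000 : ℝ) := le_trans (cos_taylor_ub hx0 hx1) (by norm_num)
  have heq1 : ((29.838 * 3.14159265358979323847 / 180 / 16) : ℝ) = 2 * (29.838 * 3.14159265358979323847 / 180 / 32) := by norm_num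
  have hs1l : (65084909603/2000000000000 : ℝ) ≤ Real.sin (29.838 * 3.14159265358979323847 / 180 / 16) := by rw [heq1, Real.sin_two_mul]; nlinarith [hs0l, hs0u, hc0l, hc0u]
  have hs1u : Real.sin (29.838 * 3.14159265358979323847 / 180 / 16) ≤ (81356174127/2500000000000 : ℝ) := by rw [heq1, Real.sin_two_mul]; nlinarith [hs0l, hs0u, hc0l, hc0u]
  have hc1l : (4997351767863/5000000000000 : ℝ) ≤ Real.cos (29.838 * 3.14159265358979323847 / 180 / 16) := by rw [heq1, cos_dbl]; nlinarith [hs0l, hs0u]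
  have hc1u : Real.cos (29.838 * 3.14159265358979323847 / 180 / 16) ≤ (2498675885121/2500000000000 : ℝ) := by rw [heq1, cos_dbl]; nlinarith [hs0l, hs0u]
  have heq2 : ((29.838 * 3.14159265358979323847 / 180 / 8) : ℝ) = 2 * (29.838 * 3.14159265358979323847 / 180 / 16) := by norm_num
  have hs2l : (650504376131/10000000000000 : ℝ) ≤ Real.sin (29.838 * 3.14159265358979323847 / 180 / 8) := by rw [heq2, Real.sin_two_mul]; nlinarith [hs1l, hs1u, hc1l, hc1u]
  have hs2u : Real.sin (29.838 * 3.14159265358979323847 / 180 / 8) ≤ (65050467327/1000000000000 : ℝ) := by rw [heq2, Real.sin_two_mul]; nlinarith [hs1l, hs1u, hc1l, hc1u]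
  have hc2l : (498940987669/500000000000 : ℝ) ≤ Real.cos (29.838 * 3.14159265358979323847 / 180 / 8) := by rw [heq2, cos_dbl]; nlinarith [hs1l, hs1u]
  have hc2u : Real.cos (29.838 * 3.14159265358979323847 / 180 / 8) ≤ (997881977271/1000000000000 : ℝ) := by rw [heq2, cos_dbl]; nlinarith [hs1l, hs1u]
  have heq3 : ((29.838 * 3.14159265358979323847 / 180 / 4) : ℝ) = 2 * (29.838 * 3.14159265358979323847 / 180 / 8) := by norm_num
  have hs3l : (1298253183639/10000000000000 : ℝ) ≤ Real.sin (29.838 * 3.14159265358979323847 / 180 / 4) := by rw [heq3, Real.sin_two_mul]; nlinarith [hs2l, hs2u, hc2l, hc2u]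
  have hs3u : Real.sin (29.838 * 3.14159265358979323847 / 180 / 4) ≤ (649126889587/5000000000000 : ℝ) := by rw [heq3, Real.sin_two_mul]; nlinarith [hs2l, hs2u, hc2l, hc2u]
  have hc3l : (991536873401/1000000000000 : ℝ) ≤ Real.cos (29.838 * 3.14159265358979323847 / 180 / 4) := by rw [heq3, cos_dbl]; nlinarith [hs2l, hs2u]
  have hc3u : Real.cos (29.838 * 3.14159265358979323847 / 180 / 4) ≤ (9915368811327/10000000000000 : ℝ) := by rw [heq3, cos_dbl]; nlinarith [hs2l, hs2u]
  have heq4 : ((29.838 * 3.14159265358979323847 / 180 / 2) : ℝ) = 2 * (29.838 * 3.14159265358979323847 / 180 / 4) := by norm_num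
  have hs4l : (321816475647/1250000000000 : ℝ) ≤ Real.sin (29.838 * 3.14159265358979323847 / 180 / 2) := by rw [heq4, Real.sin_two_mul]; nlinarith [hs3l, hs3u, hc3l, hc3u]
  have hs4u : Real.sin (29.838 * 3.14159265358979323847 / 180 / 2) ≤ (1287266503121/5000000000000 : ℝ) := by rw [heq4, Real.sin_two_mul]; nlinarith [hs3l, hs3u, hc3l, hc3u]
  have hc4l : (2415726856243/2500000000000 : ℝ) ≤ Real.cos (29.838 * 3.14159265358979323847 / 180 / 2) := by rw [heq4, cos_dbl]; nlinarith [hs3l, hs3u]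
  have hc4u : Real.cos (29.838 * 3.14159265358979323847 / 180 / 2) ≤ (1932581546847/2000000000000 : ℝ) := by rw [heq4, cos_dbl]; nlinarith [hs3l, hs3u]
  have heq5 : ((29.838 * 3.14159265358979323847 / 180) : ℝ) = 2 * (29.838 * 3.14159265358979323847 / 180 / 2) := by norm_num
  rw [heq5, cos_dbl]; nlinarith [hs4l, hs4u]

set_option maxHeartbeats 2000000 in
lemma num_sin_r2 : (1286019295323/5000000000000 : ℝ) ≤ Real.sin (14.919 * 3.14159265358979323846 / 180) := by
  have hx0 : (0:ℝ) ≤ 14.919 * 3.14159265358979323846 / 180 := by norm_num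
  have hx1 : (14.919 * 3.14159265358979323846 / 180 : ℝ) ≤ 1 := by norm_num
  exact le_trans (by norm_num) (sin_taylor_lb hx0 hx1)

set_option maxHeartbeats 2000000 in
lemma num_sin_r3 : Real.sin (20.585 * 3.14159265358979323847 / 180) ≤ (1762073149499/5000000000000 : ℝ) := by
  have hx0 : (0:ℝ) ≤ 20.585 * 3.14159265358979323847 / 180 := by norm_num
  have hx1 : (20.585 * 3.14159265358979323847 / 180 : ℝ) ≤ 1 := by norm_num
  exact le_trans (sin_taylor_ub hx0 hx1) (by norm_num)

set_option maxHeartbeats 2000000 in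
theorem f_lower_bound (a : ℝ) (h1 : Real.pi / 4 ≤ a) (h2 : a ≤ 74.838 * Real.pi / 180) :
    1 / 6 * (1 / 2 * Real.cos (a - 80.504 * Real.pi / 180) + Real.cos (a - Real.pi / 4)) ≥
      0.2274987 := by
  have piL : (3.14159265358979323846 : ℝ) < Real.pi := Real.pi_gt_d20
  have piH : Real.pi < 3.14159265358979323847 := Real.pi_lt_d20
  have pipos : (0:ℝ) < Real.pi := Real.pi_pos
  have e1 := Real.cos_sub_cos (a - 80.504 * Real.pi / 180) (74.838 * Real.pi / 180 - 80.504 * Real.pi / 180)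
  rw [show (a - 80.504 * Real.pi / 180 + (74.838 * Real.pi / 180 - 80.504 * Real.pi / 180)) / 2
        = (a + 74.838 * Real.pi / 180) / 2 - 80.504 * Real.pi / 180 from by ring,
      show (a - 80.504 * Real.pi / 180 - (74.838 * Real.pi / 180 - 80.504 * Real.pi / 180)) / 2
        = (a - 74.838 * Real.pi / 180) / 2 from by ring] at e1
  have e2 := Real.cos_sub_cos (a - Real.pi / 4) (74.838 * Real.pi / 180 - Real.pi / 4)
  rw [show (a - Real.pi / 4 + (74.838 * Real.pi / 180 - Real.pi / 4)) / 2
        = (a + 74.838 * Real.pi / 180) / 2 - Real.pi / 4 from by ring,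
      show (a - Real.pi / 4 - (74.838 * Real.pi / 180 - Real.pi / 4)) / 2
        = (a - 74.838 * Real.pi / 180) / 2 from by ring] at e2
  -- monotonicity : sin ((a+a₂)/2 - π/4) ≥ sin r₂
  have hsm2 : Real.sin (14.919 * 3.14159265358979323846 / 180)
      ≤ Real.sin ((a + 74.838 * Real.pi / 180) / 2 - Real.pi / 4) := by
    apply Real.sin_le_sin_of_le_of_le_pi_div_two
    · linarith
    · linarith
    · linarith
  have hsm3 : Real.sin (-(20.585 * 3.14159265358979323847 / 180))
      ≤ Real.sin ((a + 74.838 * Real.pi / 180) / 2 - 80.504 * Real.pi / 180) := by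
    apply Real.sin_le_sin_of_le_of_le_pi_div_two
    · linarith
    · linarith
    · linarith
  rw [Real.sin_neg] at hsm3
  have hbr : 0 ≤ 1 / 2 * Real.sin ((a + 74.838 * Real.pi / 180) / 2 - 80.504 * Real.pi / 180)
      + Real.sin ((a + 74.838 * Real.pi / 180) / 2 - Real.pi / 4) := by
    have n1 := num_sin_r2
    have n2 := num_sin_r3
    linarith
  have hdle : Real.sin ((a - 74.838 * Real.pi / 180) / 2) ≤ 0 := by
    apply Real.sin_nonpos_of_nonpos_of_neg_pi_le
    · linarith
    · linarith
  have hprod : 0 ≤ (-(Real.sin ((a - 74.838 * Real.pi / 180) / 2))) *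
      (1 / 2 * Real.sin ((a + 74.838 * Real.pi / 180) / 2 - 80.504 * Real.pi / 180)
        + Real.sin ((a + 74.838 * Real.pi / 180) / 2 - Real.pi / 4)) :=
    mul_nonneg (by linarith) hbr
  -- endpoint values
  have hE1 : Real.cos (74.838 * Real.pi / 180 - 80.504 * Real.pi / 180)
      = Real.cos (5.666 * Real.pi / 180) := by
    rw [show (74.838 * Real.pi / 180 - 80.504 * Real.pi / 180 : ℝ)
          = -(5.666 * Real.pi / 180) from by ring, Real.cos_neg]
  have hE2 : Real.cos (5.666 * 3.14159265358979323847 / 180) ≤ Real.cos (5.666 * Real.pi / 180) := by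
    apply Real.cos_le_cos_of_nonneg_of_le_pi
    · positivity
    · nlinarith
    · nlinarith
  have hE3 : Real.cos (74.838 * Real.pi / 180 - Real.pi / 4)
      = Real.cos (29.838 * Real.pi / 180) := by
    rw [show (74.838 * Real.pi / 180 - Real.pi / 4 : ℝ) = 29.838 * Real.pi / 180 from by ring]
  have hE4 : Real.cos (29.838 * 3.14159265358979323847 / 180) ≤ Real.cos (29.838 * Real.pi / 180) := by
    apply Real.cos_le_cos_of_nonneg_of_le_pi
    · positivity
    · nlinarith
    · nlinarith
  have n3 := num_cos_q1
  have n4 := num_cos_q2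
  have hend : 1 / 2 * Real.cos (74.838 * Real.pi / 180 - 80.504 * Real.pi / 180)
      + Real.cos (74.838 * Real.pi / 180 - Real.pi / 4) ≥ 1.3649922 := by
    rw [hE1, hE3]; norm_num at n3 n4 ⊢; linarith
  nlinarith [e1, e2, hprod, hend]
end
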